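/- arXiv:2305.07951 — 9 statements merged into one kernel-verified Lean document; each statement's English description precedes it below -/
import Mathlib

section
/- Let G be a topological group acting continuously and transitively on a topological space X, fix x₀ ∈ X, let p : G → X be the map p(g) = g·x₀, and let G_{x₀} = {k ∈ G : k·x₀ = x₀} be the stabilizer of x₀. Suppose there exists an open neighborhood U of x₀ and a continuous map s : U → G with s(x)·x₀ = x for all x ∈ U. Then for every x ∈ X there exist an open neighborhood W of x and a homeomorphism φ : p⁻¹(W) → W × G_{x₀} such that (i) the first component of φ(g) equals p(g) for all g ∈ p⁻¹(W), and (ii) φ is fiberwise equivariant: writing φ(g) = (p(g), ψ(g)), one has ψ(gk) = ψ(g)k for all g ∈ p⁻¹(W) and all k ∈ G_{x₀}. In particular p : G → X is a principal G_{x₀}-bundle; an explicit trivialization over g₀U (for g₀ ∈ p⁻¹({x})) is φ(g) = (p(g), s(g₀⁻¹·p(g))⁻¹ g₀⁻¹ g). -/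
/-- If a topological group `G` acts continuously and transitively on `X` and the orbit map
`p : g ↦ g • x₀` admits a continuous local section near `x₀`, then `p` is a principal
bundle with structure group the stabilizer of `x₀`: every point of `X` has an open
neighborhood `W` over which `p` trivializes by a fiberwise right-equivariant homeomorphism
`p⁻¹(W) ≃ W × G_{x₀}` commuting with the projections. -/
theorem stabilizer_principal_bundle {G X : Type*} [Group G] [TopologicalSpace G]
    [IsTopologicalGroup G] [TopologicalSpace X] [MulAction G X] [ContinuousSMul G X]
    (htrans : ∀ x y : X, ∃ g : G, g • x = y)
    (x₀ : X) (U : Set X) (hUopen : IsOpen U) (hx₀U : x₀ ∈ U)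
    (s : X → G) (hscont : ContinuousOn s U) (hsec : ∀ x ∈ U, s x • x₀ = x)
    (x : X) :
    ∃ W : Set X, IsOpen W ∧ x ∈ W ∧
      ∃ φ : {g : G // g • x₀ ∈ W} ≃ₜ (↥W × ↥(MulAction.stabilizer G x₀)),
        -- the first component of φ g is p g = g • x₀
        (∀ g : {g : G // g • x₀ ∈ W}, ((φ g).1 : X) = (g : G) • x₀) ∧
        -- φ is fiberwise equivariant for the right action of the stabilizer
        (∀ (g : {g : G // g • x₀ ∈ W}) (k : MulAction.stabilizer G x₀),
          φ ⟨(g : G) * (k : G), by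
              rw [mul_smul, MulAction.mem_stabilizer_iff.mp k.2]; exact g.2⟩
            = ((φ g).1, (φ g).2 * k)) := by
  obtain ⟨g₀, hg₀⟩ := htrans x₀ x
  set W : Set X := (fun y => g₀⁻¹ • y) ⁻¹' U with hW
  have hWopen : IsOpen W := hUopen.preimage (continuous_const_smul _)
  have hxW : x ∈ W := by
    show g₀⁻¹ • x ∈ U
    rw [← hg₀, inv_smul_smul]; exact hx₀U
  refine ⟨W, hWopen, hxW, ?_⟩
  have hmem : ∀ g : {g : G // g • x₀ ∈ W}, g₀⁻¹ • ((g : G) • x₀) ∈ U := fun g => g.2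
  have hstab : ∀ g : {g : G // g • x₀ ∈ W},
      (s (g₀⁻¹ • ((g : G) • x₀)))⁻¹ * (g₀⁻¹ * (g : G)) ∈ MulAction.stabilizer G x₀ := by
    intro g
    rw [MulAction.mem_stabilizer_iff, mul_smul, mul_smul]
    exact inv_smul_eq_iff.mpr (hsec _ (hmem g)).symm
  have hmem' : ∀ wk : ↥W × ↥(MulAction.stabilizer G x₀),
      (g₀ * s (g₀⁻¹ • (wk.1 : X)) * (wk.2 : G)) • x₀ = (wk.1 : X) := by
    rintro ⟨⟨w, hw⟩, k⟩
    simp only [mul_smul, MulAction.mem_stabilizer_iff.mp k.2]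
    rw [hsec _ hw, smul_inv_smul]
  have hcontfwd : Continuous fun g : {g : G // g • x₀ ∈ W} =>
      s (g₀⁻¹ • ((g : G) • x₀)) := by
    apply hscont.comp_continuous _ hmem
    exact (continuous_subtype_val.smul continuous_const).const_smul _
  refine ⟨⟨⟨fun g => (⟨(g : G) • x₀, g.2⟩,
      ⟨(s (g₀⁻¹ • ((g : G) • x₀)))⁻¹ * (g₀⁻¹ * (g : G)), hstab g⟩),
      fun wk => ⟨g₀ * s (g₀⁻¹ • (wk.1 : X)) * (wk.2 : G), by
        show _ • x₀ ∈ W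
        rw [hmem' wk]; exact wk.1.2⟩, ?_, ?_⟩, ?_, ?_⟩, ?_, ?_⟩
  · intro g
    apply Subtype.ext
    show g₀ * s (g₀⁻¹ • ((g : G) • x₀)) *
      ((s (g₀⁻¹ • ((g : G) • x₀)))⁻¹ * (g₀⁻¹ * (g : G))) = (g : G)
    group
  · rintro ⟨⟨w, hw⟩, k⟩
    have hp := hmem' (⟨w, hw⟩, k)
    refine Prod.ext (Subtype.ext ?_) (Subtype.ext ?_)
    · exact hp
    · show (s (g₀⁻¹ • ((g₀ * s (g₀⁻¹ • w) * (k : G)) • x₀)))⁻¹ *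
        (g₀⁻¹ * (g₀ * s (g₀⁻¹ • w) * (k : G))) = (k : G)
      rw [hp]
      group
  · apply Continuous.prodMk
    · exact ((continuous_subtype_val.smul continuous_const)).subtype_mk _
    · exact (hcontfwd.inv.mul (continuous_const.mul continuous_subtype_val)).subtype_mk _
  · have harg : Continuous fun wk : ↥W × ↥(MulAction.stabilizer G x₀) =>
        g₀⁻¹ • (wk.1 : X) := ((continuous_subtype_val.comp continuous_fst).const_smul _)
    have hcs : Continuous fun wk : ↥W × ↥(MulAction.stabilizer G x₀) =>
        s (g₀⁻¹ • (wk.1 : X)) :=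
      hscont.comp_continuous harg (fun wk => wk.1.2)
    exact ((continuous_const.mul hcs).mul
      (continuous_subtype_val.comp continuous_snd)).subtype_mk _
  · intro g; rfl
  · intro g k
    have hpk : ((g : G) * (k : G)) • x₀ = (g : G) • x₀ := by
      rw [mul_smul, MulAction.mem_stabilizer_iff.mp k.2]
    refine Prod.ext (Subtype.ext ?_) (Subtype.ext ?_)
    · exact hpk
    · show (s (g₀⁻¹ • (((g : G) * (k : G)) • x₀)))⁻¹ * (g₀⁻¹ * ((g : G) * (k : G)))
        = (s (g₀⁻¹ • ((g : G) • x₀)))⁻¹ * (g₀⁻¹ * (g : G)) * (k : G)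
      rw [hpk]
      group
end

section
/- Let G be a topological group, X a topological space, 𝒰 = (U_i)_{i∈I} an indexed open cover of X, 𝒱 = (V_j)_{j∈J} a refinement of 𝒰, and r : J → I a function with V_j ⊆ U_{r(j)} for all j ∈ J. If g and h are Čech 1-cocycles of 𝒰 with values in G such that the pulled-back cocycles g^r and h^r (g^r_{ij} = g_{r(i)r(j)}|_{V_i ∩ V_j}) are cohomologous as 1-cocycles of 𝒱, then g and h are cohomologous as 1-cocycles of 𝒰. Consequently the induced map ι_{𝒱𝒰} on first Čech cohomology sets, sending the class of g to the class of g^r, is injective. -/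
private theorem cech_aux1 {G : Type*} [Group G] (A B C D E F : G) (h1 : C * D = 1) :
    (B * (E * C * A⁻¹)) * (A * (D * F)) = B * (E * F) := by
  have : (B * (E * C * A⁻¹)) * (A * (D * F)) = B * (E * (C * D) * F) := by group
  rw [this, h1, mul_one]

private theorem cech_aux2 {G : Type*} [Group G] (A B L P Q R : G) (f1 : P * Q = R) :
    (A * (L * P)) * Q * (B * (L * R))⁻¹ = A * B⁻¹ := by
  have : (A * (L * P)) * Q * (B * (L * R))⁻¹ = A * (L * (P * Q) * R⁻¹ * L⁻¹) * B⁻¹ := by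
    group
  rw [this, f1]; group

/-- If the pullbacks of two Čech 1-cocycles along a refinement are cohomologous, then the
original cocycles are cohomologous; hence the refinement map on first Čech cohomology is
injective. -/
theorem cech_pullback_cohomologous_descends {G X I J : Type*} [Group G]
    [TopologicalSpace G] [IsTopologicalGroup G] [TopologicalSpace X]
    -- 𝒰 = (U i) is an indexed open cover of X
    (U : I → Set X) (hUopen : ∀ i, IsOpen (U i)) (hUcov : ∀ x : X, ∃ i, x ∈ U i)
    -- g and h are G-valued Čech 1-cocycles of 𝒰
    (g h : I → I → X → G)
    (hgcont : ∀ i j, ContinuousOn (g i j) (U i ∩ U j))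
    (hgcoc : ∀ i j k : I, ∀ x ∈ U i ∩ U j ∩ U k, g i j x * g j k x = g i k x)
    (hhcont : ∀ i j, ContinuousOn (h i j) (U i ∩ U j))
    (hhcoc : ∀ i j k : I, ∀ x ∈ U i ∩ U j ∩ U k, h i j x * h j k x = h i k x)
    -- 𝒱 = (V j) is an open refinement of 𝒰, with refining map r
    (V : J → Set X) (hVopen : ∀ j, IsOpen (V j)) (hVcov : ∀ x : X, ∃ j, x ∈ V j)
    (r : J → I) (hr : ∀ j, V j ⊆ U (r j))
    -- the pulled-back cocycles gʳ and hʳ are cohomologous via the 0-cochain lam of 𝒱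
    (lam : J → X → G) (hlamcont : ∀ j, ContinuousOn (lam j) (V j))
    (hcoh : ∀ i j : J, ∀ x ∈ V i ∩ V j,
      h (r i) (r j) x = lam i x * g (r i) (r j) x * (lam j x)⁻¹) :
    -- then g and h are cohomologous 1-cocycles of 𝒰
    ∃ mu : I → X → G,
      (∀ i, ContinuousOn (mu i) (U i)) ∧
      (∀ i j : I, ∀ x ∈ U i ∩ U j,
        h i j x = mu i x * g i j x * (mu j x)⁻¹) := by
  -- diagonal cocycle values are 1
  have gdiag : ∀ a : I, ∀ x ∈ U a, g a a x = 1 := fun a x hx =>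
    mul_eq_left.mp (hgcoc a a a x ⟨⟨hx, hx⟩, hx⟩)
  have hdiag : ∀ a : I, ∀ x ∈ U a, h a a x = 1 := fun a x hx =>
    mul_eq_left.mp (hhcoc a a a x ⟨⟨hx, hx⟩, hx⟩)
  have hsym : ∀ a b : I, ∀ x ∈ U a ∩ U b, h b a x = (h a b x)⁻¹ := by
    intro a b x hx
    have e := hhcoc a b a x ⟨hx, hx.1⟩
    rw [hdiag a x hx.1] at e
    exact (inv_eq_of_mul_eq_one_right e).symm
  -- choice of a member of the refinement containing each point
  choose sel hsel using hVcov
  set mu : I → X → G := fun i x =>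
    h i (r (sel x)) x * (lam (sel x) x * g (r (sel x)) i x) with hmu
  -- well-definedness: the formula is independent of the chosen member of 𝒱
  have key : ∀ i : I, ∀ x ∈ U i, ∀ j j' : J, x ∈ V j → x ∈ V j' →
      h i (r j) x * (lam j x * g (r j) i x) = h i (r j') x * (lam j' x * g (r j') i x) := by
    intro i x hxi j j' hj hj'
    have xa : x ∈ U (r j) := hr j hj
    have xa' : x ∈ U (r j') := hr j' hj'
    have e1 : h i (r j) x = h i (r j') x * h (r j') (r j) x :=
      (hhcoc i (r j') (r j) x ⟨⟨hxi, xa'⟩, xa⟩).symm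
    have e2 : g (r j) i x = g (r j) (r j') x * g (r j') i x :=
      (hgcoc (r j) (r j') i x ⟨⟨xa, xa'⟩, hxi⟩).symm
    have e3 : h (r j') (r j) x = lam j' x * g (r j') (r j) x * (lam j x)⁻¹ :=
      hcoh j' j x ⟨hj', hj⟩
    have e4 : g (r j') (r j) x * g (r j) (r j') x = 1 := by
      rw [hgcoc (r j') (r j) (r j') x ⟨⟨xa', xa⟩, xa'⟩, gdiag _ x xa']
    rw [e1, e2, e3]
    exact cech_aux1 (lam j x) (h i (r j') x) (g (r j') (r j) x) (g (r j) (r j') x)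
      (lam j' x) (g (r j') i x) e4
  have hmuval : ∀ i : I, ∀ x : X, mu i x =
      h i (r (sel x)) x * (lam (sel x) x * g (r (sel x)) i x) := fun _ _ => rfl
  refine ⟨mu, ?_, ?_⟩
  · -- continuity
    intro i x hx
    apply ContinuousAt.continuousWithinAt
    set j := sel x with hj
    have hW : IsOpen (U i ∩ V j) := (hUopen i).inter (hVopen j)
    have hxW : x ∈ U i ∩ V j := ⟨hx, hsel x⟩
    have hF : ContinuousAt (fun y => h i (r j) y * (lam j y * g (r j) i y)) x := by
      have c1 : ContinuousAt (h i (r j)) x :=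
        (hhcont i (r j)).continuousAt (((hUopen i).inter (hUopen (r j))).mem_nhds
          ⟨hx, hr j (hsel x)⟩)
      have c2 : ContinuousAt (lam j) x :=
        (hlamcont j).continuousAt ((hVopen j).mem_nhds (hsel x))
      have c3 : ContinuousAt (g (r j) i) x :=
        (hgcont (r j) i).continuousAt (((hUopen (r j)).inter (hUopen i)).mem_nhds
          ⟨hr j (hsel x), hx⟩)
      exact c1.mul (c2.mul c3)
    apply hF.congr
    filter_upwards [hW.mem_nhds hxW] with y hy
    exact (key i y hy.1 (sel y) j (hsel y) hy.2).symm
  · -- the cohomology identity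
    intro i j x hx
    set k := sel x with hk
    have hxk : x ∈ V k := hsel x
    have xrk : x ∈ U (r k) := hr k hxk
    have f1 : g (r k) i x * g i j x = g (r k) j x :=
      hgcoc (r k) i j x ⟨⟨xrk, hx.1⟩, hx.2⟩
    have f2 : h i (r k) x * h (r k) j x = h i j x :=
      hhcoc i (r k) j x ⟨⟨hx.1, xrk⟩, hx.2⟩
    have f3 : h (r k) j x = (h j (r k) x)⁻¹ := hsym j (r k) x ⟨hx.2, xrk⟩
    calc h i j x = h i (r k) x * h (r k) j x := f2.symm
      _ = h i (r k) x * (h j (r k) x)⁻¹ := by rw [f3]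
      _ = mu i x * g i j x * (mu j x)⁻¹ :=
        (cech_aux2 (h i (r k) x) (h j (r k) x) (lam k x) (g (r k) i x) (g i j x)
          (g (r k) j x) f1).symm
end

section
/- Let 𝓗 be a nonzero complex Hilbert space. The chord metric d_chd on ℙ𝓗, defined for rays with unit representatives Ψ, Ω ∈ 𝕊𝓗 by d_chd(ℂΨ, ℂΩ) = inf_{λ ∈ U(1)} ‖Ψ − λΩ‖, is a well-defined metric on ℙ𝓗; it is complete; it induces the quotient topology on ℙ𝓗; and it satisfies d_chd(ℂΨ, ℂΩ)² = 2 − 2⟪ℂΨ, ℂΩ⟫ for all Ψ, Ω ∈ 𝓗∖{0}. -/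
noncomputable section

/-- Two nonzero vectors are equivalent iff they span the same complex line. -/
def projSetoid (H : Type*) [NormedAddCommGroup H] [InnerProductSpace ℂ H] :
    Setoid {v : H // v ≠ 0} where
  r Ψ Ω := ∃ c : ℂ, (Ω : H) = c • (Ψ : H)
  iseqv := by
    refine ⟨fun Ψ => ⟨1, (one_smul ℂ (Ψ : H)).symm⟩, ?_, ?_⟩
    · rintro Ψ Ω ⟨c, hc⟩
      have hc0 : c ≠ 0 := by
        intro h
        apply Ω.2
        rw [h, zero_smul] at hc
        exact hc
      exact ⟨c⁻¹, by rw [hc, smul_smul, inv_mul_cancel₀ hc0, one_smul]⟩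
    · rintro Ψ Ω Ξ ⟨c, hc⟩ ⟨d, hd⟩
      exact ⟨d * c, by rw [hd, hc, smul_smul]⟩

/-- The projective Hilbert space `ℙ𝓗`: the space of rays (one-dimensional subspaces). -/
def ProjH (H : Type*) [NormedAddCommGroup H] [InnerProductSpace ℂ H] :=
  Quotient (projSetoid H)

/-- The canonical projection `p : 𝓗∖{0} → ℙ𝓗`, `Ψ ↦ ℂΨ`. -/
def ProjH.mk {H : Type*} [NormedAddCommGroup H] [InnerProductSpace ℂ H]
    (v : {v : H // v ≠ 0}) : ProjH H :=
  Quotient.mk (projSetoid H) v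

namespace Chord

variable {H : Type*} [NormedAddCommGroup H] [InnerProductSpace ℂ H]

/-- ray product -/
def rp (x y : H) : ℝ := ‖(inner ℂ x y : ℂ)‖ / (‖x‖ * ‖y‖)

lemma rp_nonneg (x y : H) : 0 ≤ rp x y := div_nonneg (norm_nonneg _) (by positivity)

lemma rp_le_one (x y : H) : rp x y ≤ 1 := by
  rcases eq_or_ne x 0 with rfl | hx
  · simp [rp]
  rcases eq_or_ne y 0 with rfl | hy
  · simp [rp]
  rw [rp, div_le_one (mul_pos (norm_pos_iff.2 hx) (norm_pos_iff.2 hy))]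
  exact norm_inner_le_norm (𝕜 := ℂ) x y

lemma rp_comm (x y : H) : rp x y = rp y x := by
  rw [rp, rp, ← inner_conj_symm (𝕜 := ℂ) y x, RCLike.norm_conj, mul_comm]

lemma rp_smul_left (c : ℂ) (hc : c ≠ 0) (x y : H) : rp (c • x) y = rp x y := by
  rw [rp, rp, inner_smul_left, norm_mul, norm_smul, RCLike.norm_conj]
  rw [mul_assoc, mul_div_mul_left _ _ (by simpa using hc)]

lemma rp_smul_right' (c : ℂ) (hc : c ≠ 0) (x y : H) : rp x (c • y) = rp x y := by
  rw [rp_comm, rp_smul_left c hc, rp_comm]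

lemma rp_unit (u w : H) (hu : ‖u‖ = 1) (hw : ‖w‖ = 1) : rp u w = ‖(inner ℂ u w : ℂ)‖ := by
  rw [rp, hu, hw]; norm_num

lemma rp_self (x : H) (hx : x ≠ 0) : rp x x = 1 := by
  have hx' : (0:ℝ) < ‖x‖ := norm_pos_iff.2 hx
  rw [rp, inner_self_eq_norm_sq_to_K]
  rw [div_eq_one_iff_eq (by positivity)]
  rw [norm_pow, RCLike.norm_ofReal, abs_of_nonneg hx'.le, sq]

/-- chord distance on vectors -/
def D (x y : H) : ℝ := Real.sqrt (2 - 2 * rp x y)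

lemma D_nonneg (x y : H) : 0 ≤ D x y := Real.sqrt_nonneg _

lemma D_sq (x y : H) : D x y ^ 2 = 2 - 2 * rp x y :=
  Real.sq_sqrt (by nlinarith [rp_le_one x y])

lemma D_comm (x y : H) : D x y = D y x := by rw [D, D, rp_comm]

lemma D_smul_left (c : ℂ) (hc : c ≠ 0) (x y : H) : D (c • x) y = D x y := by
  rw [D, D, rp_smul_left c hc]

lemma D_smul_right (c : ℂ) (hc : c ≠ 0) (x y : H) : D x (c • y) = D x y := by
  rw [D, D, rp_smul_right' c hc]

lemma eq_of_sq_eq {a b : ℝ} (ha : 0 ≤ a) (hb : 0 ≤ b) (h : a ^ 2 = b ^ 2) : a = b := by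
  rw [← Real.sqrt_sq ha, h, Real.sqrt_sq hb]

lemma norm_sub_smul_sq (u w : H) (hu : ‖u‖ = 1) (hw : ‖w‖ = 1) (lam : ℂ) (hl : ‖lam‖ = 1) :
    ‖u - lam • w‖ ^ 2 = 2 - 2 * RCLike.re (lam * (inner ℂ u w : ℂ)) := by
  rw [@norm_sub_sq ℂ, inner_smul_right, norm_smul, hl, hu, hw]
  ring

lemma D_le (u w : H) (hu : ‖u‖ = 1) (hw : ‖w‖ = 1) (lam : ℂ) (hl : ‖lam‖ = 1) :
    D u w ≤ ‖u - lam • w‖ := by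
  rw [← Real.sqrt_sq (norm_nonneg (u - lam • w)), D]
  apply Real.sqrt_le_sqrt
  rw [norm_sub_smul_sq u w hu hw lam hl, rp_unit u w hu hw]
  have h1 : RCLike.re (lam * (inner ℂ u w : ℂ)) ≤ ‖lam * (inner ℂ u w : ℂ)‖ := RCLike.re_le_norm _
  rw [norm_mul, hl, one_mul] at h1
  linarith

lemma exists_opt (u w : H) (hu : ‖u‖ = 1) (hw : ‖w‖ = 1) :
    ∃ lam : ℂ, ‖lam‖ = 1 ∧ ‖u - lam • w‖ = D u w := by
  set z : ℂ := inner ℂ u w with hz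
  by_cases h0 : z = 0
  · refine ⟨1, by norm_num, ?_⟩
    apply (eq_of_sq_eq (norm_nonneg _) (D_nonneg u w) ?_)
    rw [norm_sub_smul_sq u w hu hw 1 (by norm_num), D_sq, rp_unit u w hu hw, ← hz, h0]
    simp
  · refine ⟨(starRingEnd ℂ) z / ‖z‖, ?_, ?_⟩
    · rw [norm_div, RCLike.norm_conj]
      simp [h0]
    · apply (eq_of_sq_eq (norm_nonneg _) (D_nonneg u w) ?_)
      have hl : ‖(starRingEnd ℂ) z / (‖z‖ : ℂ)‖ = 1 := by
        rw [norm_div, RCLike.norm_conj]; simp [h0]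
      rw [norm_sub_smul_sq u w hu hw _ hl, D_sq, rp_unit u w hu hw, ← hz]
      congr 1
      have hz0 : (‖z‖ : ℝ) ≠ 0 := norm_ne_zero_iff.2 h0
      have hcz : (starRingEnd ℂ) z * z = ((‖z‖ ^ 2 : ℝ) : ℂ) := by
        rw [mul_comm, Complex.mul_conj]
        norm_cast
        rw [← Complex.sq_norm]
      have : (starRingEnd ℂ) z / (‖z‖ : ℂ) * z = ((‖z‖ : ℝ) : ℂ) := by
        rw [div_mul_eq_mul_div, hcz]
        rw [Complex.ofReal_pow, sq, mul_div_assoc, div_self (by exact_mod_cast hz0), mul_one]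
      rw [this]
      simp



lemma D_self (x : H) (hx : x ≠ 0) : D x x = 0 := by
  rw [D, rp_self x hx]; norm_num

def nrm (x : H) : H := ((‖x‖⁻¹ : ℝ) : ℂ) • x

lemma coe_inv_norm_ne_zero {x : H} (hx : x ≠ 0) : ((‖x‖⁻¹ : ℝ) : ℂ) ≠ 0 := by
  simp [norm_eq_zero, hx]

lemma norm_nrm (x : H) (hx : x ≠ 0) : ‖nrm x‖ = 1 := by
  rw [nrm, norm_smul, Complex.norm_real, Real.norm_of_nonneg (by positivity)]
  exact inv_mul_cancel₀ (norm_ne_zero_iff.2 hx)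

lemma nrm_ne_zero (x : H) (hx : x ≠ 0) : nrm x ≠ 0 := by
  intro h
  have := norm_nrm x hx
  rw [h] at this
  simp at this

lemma D_nrm (x y : H) (hx : x ≠ 0) (hy : y ≠ 0) : D x y = D (nrm x) (nrm y) := by
  rw [nrm, nrm, D_smul_left _ (coe_inv_norm_ne_zero hx), D_smul_right _ (coe_inv_norm_ne_zero hy)]

lemma D_triangle_unit (u v w : H) (hu : ‖u‖ = 1) (hv : ‖v‖ = 1) (hw : ‖w‖ = 1) :
    D u w ≤ D u v + D v w := by
  obtain ⟨l, hl, hle⟩ := exists_opt u v hu hv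
  obtain ⟨mu, hm, hme⟩ := exists_opt v w hv hw
  calc D u w ≤ ‖u - (l * mu) • w‖ :=
        D_le u w hu hw _ (by rw [norm_mul, hl, hm, one_mul])
    _ ≤ ‖u - l • v‖ + ‖l • v - (l * mu) • w‖ := norm_sub_le_norm_sub_add_norm_sub _ _ _
    _ = D u v + ‖v - mu • w‖ := by
        rw [hle, ← smul_smul, ← smul_sub, norm_smul, hl, one_mul]
    _ = D u v + D v w := by rw [hme]

lemma D_triangle (x y z : H) (hx : x ≠ 0) (hy : y ≠ 0) (hz : z ≠ 0) :
    D x z ≤ D x y + D y z := by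
  rw [D_nrm x z hx hz, D_nrm x y hx hy, D_nrm y z hy hz]
  exact D_triangle_unit _ _ _ (norm_nrm x hx) (norm_nrm y hy) (norm_nrm z hz)

lemma rel_of_D_eq_zero {x y : H} (hx : x ≠ 0) (hy : y ≠ 0) (h : D x y = 0) :
    ∃ c : ℂ, y = c • x := by
  have h2 : rp x y = 1 := by
    have := D_sq x y
    rw [h] at this
    norm_num at this
    linarith
  rw [rp, div_eq_one_iff_eq (mul_pos (norm_pos_iff.2 hx) (norm_pos_iff.2 hy)).ne'] at h2
  · obtain ⟨r, _, hr⟩ := (norm_inner_eq_norm_iff hx hy).1 h2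
    exact ⟨r, hr⟩

def cd : ProjH H → ProjH H → ℝ :=
  Quotient.lift₂ (fun a b : {v : H // v ≠ 0} => D (a : H) (b : H)) <| by
    rintro a₁ b₁ a₂ b₂ ⟨c, hc⟩ ⟨e, he⟩
    have hc0 : c ≠ 0 := fun h => a₂.2 (by rw [hc, h, zero_smul])
    have he0 : e ≠ 0 := fun h => b₂.2 (by rw [he, h, zero_smul])
    simp only [hc, he, D_smul_left c hc0, D_smul_right e he0]

lemma cd_mk (a b : {v : H // v ≠ 0}) : cd (ProjH.mk a) (ProjH.mk b) = D (a : H) (b : H) := rfl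

def chordMetric : MetricSpace (ProjH H) where
  dist := cd
  dist_self q := Quotient.inductionOn q fun a => D_self (a : H) a.2
  dist_comm q r := Quotient.inductionOn₂ q r fun a b => D_comm (a : H) (b : H)
  dist_triangle q r s := Quotient.inductionOn₃ q r s fun a b c =>
    D_triangle (a : H) (b : H) (c : H) a.2 b.2 c.2
  eq_of_dist_eq_zero := by
    intro q r
    refine Quotient.inductionOn₂ q r fun a b h => ?_
    exact Quotient.sound (rel_of_D_eq_zero a.2 b.2 h)

variable [Nontrivial H]

open Classical in
def mkOf (v : H) : ProjH H :=
  if h : v ≠ 0 then ProjH.mk ⟨v, h⟩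
  else ProjH.mk ⟨Classical.choose (exists_ne (0 : H)), Classical.choose_spec (exists_ne (0 : H))⟩

lemma mkOf_eq {v : H} (h : v ≠ 0) : mkOf v = ProjH.mk ⟨v, h⟩ := by
  rw [mkOf, dif_pos h]

lemma mk_smul (c : ℂ) (v : H) (hv : v ≠ 0) (h2 : c • v ≠ 0) :
    ProjH.mk ⟨c • v, h2⟩ = ProjH.mk ⟨v, hv⟩ := by
  refine (Quotient.sound ?_).symm
  exact ⟨c, rfl⟩

lemma mkOf_smul (c : ℂ) (hc : c ≠ 0) {v : H} (hv : v ≠ 0) : mkOf (c • v) = mkOf v := by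
  have h2 : c • v ≠ 0 := smul_ne_zero hc hv
  rw [mkOf_eq h2, mkOf_eq hv]
  exact mk_smul c v hv h2

lemma mkOf_nrm {v : H} (hv : v ≠ 0) : mkOf (nrm v) = mkOf v :=
  mkOf_smul _ (coe_inv_norm_ne_zero hv) hv

lemma cd_mkOf {a b : H} (ha : a ≠ 0) (hb : b ≠ 0) : cd (mkOf a) (mkOf b) = D a b := by
  rw [mkOf_eq ha, mkOf_eq hb]; rfl

lemma mkOf_out (q : ProjH H) : mkOf ((Quotient.out q : {v : H // v ≠ 0}) : H) = q := by
  rw [mkOf_eq (Quotient.out q).2]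
  exact Quotient.out_eq q

lemma exists_rep (v : H) (hv : ‖v‖ = 1) (q : ProjH H) :
    ∃ w : H, ‖w‖ = 1 ∧ mkOf w = q ∧ ‖v - w‖ = cd (mkOf v) q := by
  have hv0 : v ≠ 0 := fun h => by simp [h] at hv
  set a : {v : H // v ≠ 0} := Quotient.out q with ha
  set y : H := nrm (a : H) with hy
  have hy1 : ‖y‖ = 1 := norm_nrm _ a.2
  have hy0 : y ≠ 0 := nrm_ne_zero _ a.2
  have hyq : mkOf y = q := by rw [hy, mkOf_nrm a.2, mkOf_out]
  obtain ⟨l, hl, hle⟩ := exists_opt v y hv hy1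
  have hl0 : l ≠ 0 := fun h => by simp [h] at hl
  refine ⟨l • y, ?_, ?_, ?_⟩
  · rw [norm_smul, hl, one_mul, hy1]
  · rw [mkOf_smul l hl0 hy0, hyq]
  · rw [hle, ← hyq, cd_mkOf hv0 hy0]

lemma exists_rep' (v : H) (q : ProjH H) :
    ∃ w : H, ‖v‖ = 1 → (‖w‖ = 1 ∧ mkOf w = q ∧ ‖v - w‖ = cd (mkOf v) q) := by
  by_cases h : ‖v‖ = 1
  · obtain ⟨w, hw⟩ := exists_rep v h q
    exact ⟨w, fun _ => hw⟩
  · exact ⟨0, fun h' => absurd h' h⟩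

def next (v : H) (q : ProjH H) : H := Classical.choose (exists_rep' v q)

lemma next_spec {v : H} (q : ProjH H) (hv : ‖v‖ = 1) :
    ‖next v q‖ = 1 ∧ mkOf (next v q) = q ∧ ‖v - next v q‖ = cd (mkOf v) q :=
  Classical.choose_spec (exists_rep' v q) hv

end Chord

open Chord in
/-- The chord metric on projective Hilbert space: there is a metric on `ℙ𝓗` given on rays
with unit representatives `Ψ, Ω` by `inf_{λ ∈ U(1)} ‖Ψ − λΩ‖`; it is complete, it induces the
quotient topology on `ℙ𝓗`, and its square equals `2 − 2⟪ℂΨ, ℂΩ⟫` where `⟪·,·⟫` is the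
ray product `|⟨Ψ,Ω⟩| / (‖Ψ‖‖Ω‖)`. -/
theorem chord_metric (H : Type*) [NormedAddCommGroup H] [InnerProductSpace ℂ H]
    [CompleteSpace H] [Nontrivial H] :
    ∃ m : MetricSpace (ProjH H),
      -- defining formula: on unit representatives, dist is inf over U(1) of ‖Ψ − λΩ‖
      (∀ Ψ Ω : {v : H // v ≠ 0}, ‖(Ψ : H)‖ = 1 → ‖(Ω : H)‖ = 1 →
        m.dist (ProjH.mk Ψ) (ProjH.mk Ω)
          = ⨅ lam : Metric.sphere (0 : ℂ) 1, ‖(Ψ : H) - (lam : ℂ) • (Ω : H)‖) ∧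
      -- the chord metric is complete
      @CompleteSpace (ProjH H) m.toUniformSpace ∧
      -- the chord metric induces the quotient topology on ℙ𝓗
      m.toUniformSpace.toTopologicalSpace
        = TopologicalSpace.coinduced (ProjH.mk (H := H)) inferInstance ∧
      -- d_chd(ℂΨ, ℂΩ)² = 2 − 2⟪ℂΨ, ℂΩ⟫ for all nonzero Ψ, Ω
      (∀ Ψ Ω : {v : H // v ≠ 0},
        m.dist (ProjH.mk Ψ) (ProjH.mk Ω) ^ 2
          = 2 - 2 * (‖(inner ℂ (Ψ : H) (Ω : H) : ℂ)‖ / (‖(Ψ : H)‖ * ‖(Ω : H)‖))) := by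
  classical
  refine ⟨chordMetric, ?_, ?_, ?_, ?_⟩
  · -- iInf formula
    intro Ψ Ω hΨ hΩ
    have hd : chordMetric.dist (ProjH.mk Ψ) (ProjH.mk Ω) = D (Ψ : H) (Ω : H) := rfl
    rw [hd]
    have hbdd : BddBelow (Set.range fun lam : Metric.sphere (0 : ℂ) 1 =>
        ‖(Ψ : H) - (lam : ℂ) • (Ω : H)‖) := by
      refine ⟨0, ?_⟩
      rintro x ⟨lam, rfl⟩
      exact norm_nonneg _
    refine le_antisymm ?_ ?_
    · refine le_ciInf fun lam => ?_
      exact D_le _ _ hΨ hΩ _ (mem_sphere_zero_iff_norm.1 lam.2)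
    · obtain ⟨l, hl, hle⟩ := exists_opt (Ψ : H) (Ω : H) hΨ hΩ
      exact (ciInf_le hbdd (⟨l, mem_sphere_zero_iff_norm.2 hl⟩ :
        Metric.sphere (0 : ℂ) 1)).trans hle.le
  · -- completeness
    letI := chordMetric (H := H)
    show CompleteSpace (ProjH H)
    apply Metric.complete_of_convergent_controlled_sequences
      (fun n => (1 / 2 : ℝ) ^ n) (fun n => by positivity)
    intro u hu
    set v : ℕ → H := fun n =>
      Nat.rec (nrm ((Quotient.out (u 0) : {v : H // v ≠ 0}) : H))
        (fun n vn => next vn (u (n + 1))) n with hvdef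
    have hinv : ∀ n, ‖v n‖ = 1 ∧ mkOf (v n) = u n := by
      intro n
      induction n with
      | zero =>
        refine ⟨norm_nrm _ (Quotient.out (u 0)).2, ?_⟩
        show mkOf (nrm ((Quotient.out (u 0) : {v : H // v ≠ 0}) : H)) = u 0
        rw [mkOf_nrm (Quotient.out (u 0)).2, mkOf_out]
      | succ n ih =>
        have hs := next_spec (u (n + 1)) ih.1
        exact ⟨hs.1, hs.2.1⟩
    have hdist : ∀ n, dist (v n) (v (n + 1)) ≤ 1 * (1 / 2 : ℝ) ^ n := by
      intro n
      have hs := next_spec (u (n + 1)) (hinv n).1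
      rw [one_mul, dist_eq_norm]
      have hvs : v (n + 1) = next (v n) (u (n + 1)) := rfl
      rw [hvs, hs.2.2, (hinv n).2]
      exact (hu n n (n + 1) le_rfl (Nat.le_succ n)).le
    have hc : CauchySeq v := cauchySeq_of_le_geometric (1 / 2) 1 (by norm_num) hdist
    obtain ⟨l, hl⟩ := cauchySeq_tendsto_of_complete hc
    have hln : ‖l‖ = 1 := by
      have h1 : Filter.Tendsto (fun n => ‖v n‖) Filter.atTop (nhds ‖l‖) := hl.norm
      have h2 : (fun n => ‖v n‖) = fun _ => (1 : ℝ) := funext fun n => (hinv n).1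
      rw [h2] at h1
      exact tendsto_nhds_unique h1 tendsto_const_nhds
    have hl0 : l ≠ 0 := fun h => by simp [h] at hln
    refine ⟨mkOf l, ?_⟩
    rw [tendsto_iff_dist_tendsto_zero]
    refine squeeze_zero (fun n => dist_nonneg) (fun n => ?_)
      (tendsto_iff_norm_sub_tendsto_zero.1 hl)
    have hvn0 : v n ≠ 0 := fun h => by simpa [h] using (hinv n).1
    calc dist (u n) (mkOf l) = cd (mkOf (v n)) (mkOf l) := by rw [(hinv n).2]; rfl
      _ = D (v n) l := cd_mkOf hvn0 hl0
      _ ≤ ‖v n - (1 : ℂ) • l‖ := D_le _ _ (hinv n).1 hln 1 (by norm_num)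
      _ = ‖v n - l‖ := by rw [one_smul]
  · -- topology
    letI := chordMetric (H := H)
    have hcont : Continuous (ProjH.mk (H := H)) := by
      rw [Metric.continuous_iff]
      intro b ε hε
      have hg : Continuous (fun a : {v : H // v ≠ 0} => nrm a.1) := by
        have h1 : Continuous (fun a : {v : H // v ≠ 0} => ((‖a.1‖⁻¹ : ℝ) : ℂ)) :=
          Complex.continuous_ofReal.comp
            ((continuous_subtype_val.norm).inv₀ fun a => norm_ne_zero_iff.2 a.2)
        exact h1.smul continuous_subtype_val
      obtain ⟨δ, hδ, hδ2⟩ := Metric.continuous_iff.1 hg b ε hε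
      refine ⟨δ, hδ, fun a ha => ?_⟩
      have key : dist (ProjH.mk a) (ProjH.mk b) ≤ dist (nrm (a : H)) (nrm (b : H)) := by
        show cd (ProjH.mk a) (ProjH.mk b) ≤ _
        rw [cd_mk, D_nrm _ _ a.2 b.2, dist_eq_norm]
        calc D (nrm (a : H)) (nrm (b : H)) ≤ ‖nrm (a : H) - (1 : ℂ) • nrm (b : H)‖ :=
              D_le _ _ (norm_nrm _ a.2) (norm_nrm _ b.2) 1 (by norm_num)
          _ = ‖nrm (a : H) - nrm (b : H)‖ := by rw [one_smul]
      exact lt_of_le_of_lt key (hδ2 a ha)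
    refine le_antisymm ?_ (continuous_iff_coinduced_le.mp hcont)
    refine TopologicalSpace.le_def.2 fun U hU => ?_
    have hpre : IsOpen (ProjH.mk (H := H) ⁻¹' U) := isOpen_coinduced.1 hU
    show IsOpen U
    rw [Metric.isOpen_iff]
    intro q hq
    set a : {v : H // v ≠ 0} := Quotient.out q with hadef
    set y : H := nrm (a : H) with hydef
    have hy1 : ‖y‖ = 1 := norm_nrm _ a.2
    have hy0 : y ≠ 0 := nrm_ne_zero _ a.2
    have hyq : mkOf y = q := by rw [hydef, mkOf_nrm a.2, hadef, mkOf_out]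
    have hymem : (⟨y, hy0⟩ : {v : H // v ≠ 0}) ∈ ProjH.mk (H := H) ⁻¹' U := by
      show ProjH.mk ⟨y, hy0⟩ ∈ U
      rw [← mkOf_eq hy0, hyq]
      exact hq
    obtain ⟨δ, hδ, hball⟩ := Metric.isOpen_iff.1 hpre ⟨y, hy0⟩ hymem
    refine ⟨δ, hδ, fun q' hq' => ?_⟩
    obtain ⟨w, hw1, hwq, hwd⟩ := exists_rep y hy1 q'
    have hw0 : w ≠ 0 := fun h => by simp [h] at hw1
    have hwball : (⟨w, hw0⟩ : {v : H // v ≠ 0}) ∈ Metric.ball (⟨y, hy0⟩ : {v : H // v ≠ 0}) δ := by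
      rw [Metric.mem_ball, Subtype.dist_eq, dist_eq_norm, ← norm_neg, neg_sub, hwd, hyq]
      have : cd q q' = dist q q' := rfl
      rw [this]
      rw [Metric.mem_ball] at hq'
      rwa [dist_comm]
    have := hball hwball
    rw [Set.mem_preimage] at this
    rwa [← mkOf_eq hw0, hwq] at this
  · -- square formula
    intro Ψ Ω
    have hd : chordMetric.dist (ProjH.mk Ψ) (ProjH.mk Ω) = D (Ψ : H) (Ω : H) := rfl
    rw [hd, D_sq]
    rfl


end
end

section
/- Let 𝓗 be a nonzero complex Hilbert space. The Fubini–Study distance d_FS on ℙ𝓗, defined by d_FS(ℂΨ, ℂΩ) = arccos ⟪ℂΨ, ℂΩ⟫, is a metric on ℙ𝓗, and it is equivalent to the chord metric: for all Ψ, Ω ∈ 𝓗∖{0}, d_chd(ℂΨ, ℂΩ) ≤ d_FS(ℂΨ, ℂΩ) ≤ (π√2/4) · d_chd(ℂΨ, ℂΩ). -/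
noncomputable section

namespace FSAux

open Real

variable {H : Type*} [NormedAddCommGroup H] [InnerProductSpace ℂ H]

local notation "⟪" x ", " y "⟫" => (inner ℂ x y : ℂ)

lemma perp_norm_sq (x y : H) (hx : ‖x‖ = 1) (hy : ‖y‖ = 1) :
    ‖x - ⟪y, x⟫ • y‖ ^ 2 = 1 - ‖⟪x, y⟫‖ ^ 2 := by
  have h := @norm_sub_sq ℂ H _ _ _ x (⟪y, x⟫ • y)
  rw [h, inner_smul_right, norm_smul, hx, hy, ← inner_conj_symm x y, RCLike.mul_conj]
  simp [← Complex.ofReal_pow, norm_inner_symm x y]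
  ring

lemma decomp (x y z : H) (hy : ‖y‖ = 1) :
    ⟪x, z⟫ = ⟪x, y⟫ * ⟪y, z⟫ + ⟪x - ⟪y, x⟫ • y, z - ⟪y, z⟫ • y⟫ := by
  have hyy : ⟪y, y⟫ = 1 := by
    rw [@inner_self_eq_norm_sq_to_K ℂ, hy]; norm_num
  simp only [inner_sub_left, inner_sub_right, inner_smul_left, inner_smul_right,
    inner_conj_symm, hyy, mul_one]
  ring

lemma key_ineq (x y z : H) (hx : ‖x‖ = 1) (hy : ‖y‖ = 1) (hz : ‖z‖ = 1) :
    ‖⟪x, y⟫‖ * ‖⟪y, z⟫‖ - Real.sqrt (1 - ‖⟪x, y⟫‖ ^ 2) * Real.sqrt (1 - ‖⟪y, z⟫‖ ^ 2)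
      ≤ ‖⟪x, z⟫‖ := by
  have hd := decomp x y z hy
  have h1 : ‖⟪x, y⟫ * ⟪y, z⟫‖ - ‖⟪x - ⟪y, x⟫ • y, z - ⟪y, z⟫ • y⟫‖ ≤ ‖⟪x, z⟫‖ := by
    calc ‖⟪x, y⟫ * ⟪y, z⟫‖ - ‖⟪x - ⟪y, x⟫ • y, z - ⟪y, z⟫ • y⟫‖
        ≤ ‖⟪x, y⟫ * ⟪y, z⟫ + ⟪x - ⟪y, x⟫ • y, z - ⟪y, z⟫ • y⟫‖ := by
          have h0 : ‖⟪x, y⟫ * ⟪y, z⟫‖ ≤ ‖⟪x, y⟫ * ⟪y, z⟫ + ⟪x - ⟪y, x⟫ • y, z - ⟪y, z⟫ • y⟫‖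
              + ‖⟪x - ⟪y, x⟫ • y, z - ⟪y, z⟫ • y⟫‖ := by
            have := norm_sub_le (⟪x, y⟫ * ⟪y, z⟫ + ⟪x - ⟪y, x⟫ • y, z - ⟪y, z⟫ • y⟫)
              (⟪x - ⟪y, x⟫ • y, z - ⟪y, z⟫ • y⟫)
            rw [add_sub_cancel_right] at this
            simpa using this
          linarith
      _ = ‖⟪x, z⟫‖ := by rw [← hd]
  refine le_trans ?_ h1
  rw [norm_mul]
  have h2 : ‖⟪x - ⟪y, x⟫ • y, z - ⟪y, z⟫ • y⟫‖
      ≤ Real.sqrt (1 - ‖⟪x, y⟫‖ ^ 2) * Real.sqrt (1 - ‖⟪y, z⟫‖ ^ 2) := by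
    have hcs := norm_inner_le_norm (𝕜 := ℂ) (x - ⟪y, x⟫ • y) (z - ⟪y, z⟫ • y)
    have e1 : ‖x - ⟪y, x⟫ • y‖ = Real.sqrt (1 - ‖⟪x, y⟫‖ ^ 2) := by
      rw [← perp_norm_sq x y hx hy]; exact (Real.sqrt_sq (norm_nonneg _)).symm
    have e2 : ‖z - ⟪y, z⟫ • y‖ = Real.sqrt (1 - ‖⟪z, y⟫‖ ^ 2) := by
      rw [← perp_norm_sq z y hz hy]; exact (Real.sqrt_sq (norm_nonneg _)).symm
    rw [e1, e2, norm_inner_symm z y] at hcs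
    exact hcs
  linarith

lemma arccos_tri {a b c : ℝ} (ha : 0 ≤ a) (ha1 : a ≤ 1) (hb : 0 ≤ b) (hb1 : b ≤ 1)
    (h : a * b - Real.sqrt (1 - a ^ 2) * Real.sqrt (1 - b ^ 2) ≤ c) :
    Real.arccos c ≤ Real.arccos a + Real.arccos b := by
  by_cases hpi : π ≤ Real.arccos a + Real.arccos b
  · exact le_trans (Real.arccos_le_pi c) hpi
  · push_neg at hpi
    have hAB0 : 0 ≤ Real.arccos a + Real.arccos b :=
      add_nonneg (Real.arccos_nonneg a) (Real.arccos_nonneg b)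
    have hcos : Real.cos (Real.arccos a + Real.arccos b) ≤ c := by
      rw [Real.cos_add, Real.cos_arccos (by linarith) ha1, Real.cos_arccos (by linarith) hb1,
        Real.sin_arccos, Real.sin_arccos]
      exact h
    calc Real.arccos c ≤ Real.arccos (Real.cos (Real.arccos a + Real.arccos b)) := by
          have := Real.monotone_arcsin hcos
          simp only [Real.arccos] at *
          linarith
      _ = Real.arccos a + Real.arccos b := Real.arccos_cos hAB0 hpi.le

/-- The ray product. -/
def rp (x y : H) : ℝ := ‖⟪x, y⟫‖ / (‖x‖ * ‖y‖)

lemma rp_comm (x y : H) : rp x y = rp y x := by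
  unfold rp
  rw [norm_inner_symm, mul_comm]

lemma rp_smul_left (x y : H) {c : ℂ} (hc : c ≠ 0) : rp (c • x) y = rp x y := by
  unfold rp
  rw [inner_smul_left, norm_mul, norm_smul, RCLike.norm_conj, mul_assoc, mul_div_mul_left]
  simpa using hc

lemma rp_smul_right (x y : H) {c : ℂ} (hc : c ≠ 0) : rp x (c • y) = rp x y := by
  rw [rp_comm, rp_smul_left y x hc, rp_comm]

lemma rp_nonneg (x y : H) : 0 ≤ rp x y :=
  div_nonneg (norm_nonneg _) (mul_nonneg (norm_nonneg _) (norm_nonneg _))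

lemma rp_le_one (x y : H) : rp x y ≤ 1 := by
  unfold rp
  rcases eq_or_ne (‖x‖ * ‖y‖) 0 with h | h
  · rw [h, div_zero]; norm_num
  · have hpos : 0 < ‖x‖ * ‖y‖ := lt_of_le_of_ne
      (mul_nonneg (norm_nonneg _) (norm_nonneg _)) (Ne.symm h)
    rw [div_le_one hpos]
    exact norm_inner_le_norm x y

lemma norm_normalize {x : H} (hx : x ≠ 0) : ‖((‖x‖ : ℂ)⁻¹ • x : H)‖ = 1 := by
  rw [norm_smul]
  have : ‖x‖ ≠ 0 := norm_ne_zero_iff.2 hx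
  simp [this]

lemma rp_eq_normalized {x y : H} (hx : x ≠ 0) (hy : y ≠ 0) :
    rp x y = ‖⟪((‖x‖ : ℂ)⁻¹ • x : H), ((‖y‖ : ℂ)⁻¹ • y : H)⟫‖ := by
  have hx' : (‖x‖ : ℂ) ≠ 0 := by
    simpa using norm_ne_zero_iff.2 hx
  have hy' : (‖y‖ : ℂ) ≠ 0 := by
    simpa using norm_ne_zero_iff.2 hy
  have := rp_smul_left ((‖y‖:ℂ)⁻¹ • y) x (inv_ne_zero hx')
  have h2 := rp_smul_right x y (inv_ne_zero hy')
  rw [← h2, ← rp_smul_left (c := (‖x‖:ℂ)⁻¹) _ _ (inv_ne_zero hx')]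
  unfold rp
  rw [norm_normalize hx, norm_normalize hy]
  simp

/-- The Fubini–Study distance on representatives. -/
def dfs (Ψ Ω : {v : H // v ≠ 0}) : ℝ := Real.arccos (rp (Ψ : H) (Ω : H))

lemma dfs_lift : ∀ (a₁ b₁ a₂ b₂ : {v : H // v ≠ 0}),
    (projSetoid H).r a₁ a₂ → (projSetoid H).r b₁ b₂ → dfs a₁ b₁ = dfs a₂ b₂ := by
  rintro a₁ b₁ a₂ b₂ ⟨c, hc⟩ ⟨d, hd⟩
  have hc0 : c ≠ 0 := by
    intro h; apply a₂.2; rw [hc, h, zero_smul]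
  have hd0 : d ≠ 0 := by
    intro h; apply b₂.2; rw [hd, h, zero_smul]
  unfold dfs
  rw [hc, hd, rp_smul_left _ _ hc0, rp_smul_right _ _ hd0]

/-- The Fubini–Study distance on the projective space. -/
def dFS : ProjH H → ProjH H → ℝ :=
  Quotient.lift₂ dfs dfs_lift

lemma dFS_mk (Ψ Ω : {v : H // v ≠ 0}) : dFS (ProjH.mk Ψ) (ProjH.mk Ω) = dfs Ψ Ω := rfl

lemma dFS_self (P : ProjH H) : dFS P P = 0 := by
  induction P using Quotient.ind with
  | _ Ψ =>
    show dfs Ψ Ψ = 0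
    unfold dfs rp
    have hn : ‖(Ψ : H)‖ ≠ 0 := norm_ne_zero_iff.2 Ψ.2
    have h2 : ‖⟪(Ψ : H), (Ψ : H)⟫‖ = ‖(Ψ : H)‖ * ‖(Ψ : H)‖ := by
      rw [@inner_self_eq_norm_sq_to_K ℂ, norm_pow, RCLike.norm_ofReal, abs_norm, sq]
    rw [h2, div_self (by positivity)]
    exact Real.arccos_one

lemma dFS_comm (P Q : ProjH H) : dFS P Q = dFS Q P := by
  induction P using Quotient.ind with
  | _ Ψ =>
    induction Q using Quotient.ind with
    | _ Ω =>
      show dfs Ψ Ω = dfs Ω Ψ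
      unfold dfs
      rw [rp_comm]

lemma dFS_triangle (P Q R : ProjH H) : dFS P R ≤ dFS P Q + dFS Q R := by
  induction P using Quotient.ind with
  | _ Ψ =>
  induction Q using Quotient.ind with
  | _ Ω =>
  induction R using Quotient.ind with
  | _ Ξ =>
  show dfs Ψ Ξ ≤ dfs Ψ Ω + dfs Ω Ξ
  unfold dfs
  set x : H := (‖(Ψ : H)‖ : ℂ)⁻¹ • (Ψ : H) with hxdef
  set y : H := (‖(Ω : H)‖ : ℂ)⁻¹ • (Ω : H) with hydef
  set z : H := (‖(Ξ : H)‖ : ℂ)⁻¹ • (Ξ : H) with hzdef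
  have hx : ‖x‖ = 1 := norm_normalize Ψ.2
  have hy : ‖y‖ = 1 := norm_normalize Ω.2
  have hz : ‖z‖ = 1 := norm_normalize Ξ.2
  rw [rp_eq_normalized Ψ.2 Ξ.2, rp_eq_normalized Ψ.2 Ω.2, rp_eq_normalized Ω.2 Ξ.2]
  have hab : ‖⟪x, y⟫‖ ≤ 1 := by
    have := norm_inner_le_norm (𝕜 := ℂ) x y
    rwa [hx, hy, one_mul] at this
  have hbc : ‖⟪y, z⟫‖ ≤ 1 := by
    have := norm_inner_le_norm (𝕜 := ℂ) y z
    rwa [hy, hz, one_mul] at this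
  exact arccos_tri (norm_nonneg _) hab (norm_nonneg _) hbc (key_ineq x y z hx hy hz)

lemma dFS_eq_zero {P Q : ProjH H} (h : dFS P Q = 0) : P = Q := by
  induction P using Quotient.ind with
  | _ Ψ =>
  induction Q using Quotient.ind with
  | _ Ω =>
  have h1 : 1 ≤ rp (Ψ : H) (Ω : H) := Real.arccos_eq_zero.1 h
  have h2 : rp (Ψ : H) (Ω : H) = 1 := le_antisymm (rp_le_one _ _) h1
  have hpos : 0 < ‖(Ψ : H)‖ * ‖(Ω : H)‖ := by
    have := norm_ne_zero_iff.2 Ψ.2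
    have := norm_ne_zero_iff.2 Ω.2
    positivity
  have h3 : ‖⟪(Ψ : H), (Ω : H)⟫‖ = ‖(Ψ : H)‖ * ‖(Ω : H)‖ := by
    unfold rp at h2
    rwa [div_eq_one_iff_eq hpos.ne'] at h2
  obtain ⟨r, hr0, hr⟩ := (norm_inner_eq_norm_iff Ψ.2 Ω.2).1 h3
  exact Quotient.sound ⟨r, hr⟩

lemma lin_le_sin {φ : ℝ} (h0 : 0 ≤ φ) (h1 : φ ≤ π / 4) :
    2 * Real.sqrt 2 * φ ≤ π * Real.sin φ := by
  have hpi : (0:ℝ) < π := Real.pi_pos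
  have hco := strictConcaveOn_sin_Icc.concaveOn
  set t : ℝ := φ / (π / 4) with ht
  have ht0 : 0 ≤ t := div_nonneg h0 (by positivity)
  have ht1 : t ≤ 1 := (div_le_one (by positivity)).2 h1
  have hmem0 : (0:ℝ) ∈ Set.Icc 0 π := ⟨le_refl _, hpi.le⟩
  have hmem1 : (π/4 : ℝ) ∈ Set.Icc 0 π := ⟨by positivity, by linarith⟩
  have hkey := hco.2 hmem0 hmem1 (by linarith : (0:ℝ) ≤ 1 - t) ht0 (by ring)
  have hφ : (1 - t) • (0:ℝ) + t • (π/4) = φ := by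
    simp only [smul_eq_mul, mul_zero, zero_add, ht]
    field_simp
  rw [hφ] at hkey
  have hsin : (1 - t) • Real.sin 0 + t • Real.sin (π/4) = t * (Real.sqrt 2 / 2) := by
    rw [Real.sin_zero, Real.sin_pi_div_four]
    simp [smul_eq_mul]
  rw [hsin] at hkey
  have : t * (Real.sqrt 2 / 2) = 2 * Real.sqrt 2 * φ / π := by
    rw [ht]; field_simp; ring
  rw [this] at hkey
  rw [div_le_iff₀ hpi] at hkey
  linarith [hkey]

end FSAux

/-- The Fubini–Study distance `d_FS(ℂΨ, ℂΩ) = arccos ⟪ℂΨ, ℂΩ⟫` is a metric on `ℙ𝓗`, and it is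
equivalent to the chord metric: `d_chd ≤ d_FS ≤ (π√2/4) d_chd`. -/
theorem fubini_study_metric (H : Type*) [NormedAddCommGroup H] [InnerProductSpace ℂ H]
    [CompleteSpace H] [Nontrivial H] :
    ∃ m : MetricSpace (ProjH H),
      -- defining formula: d_FS = arccos of the ray product
      (∀ Ψ Ω : {v : H // v ≠ 0},
        m.dist (ProjH.mk Ψ) (ProjH.mk Ω)
          = Real.arccos (‖(inner ℂ (Ψ : H) (Ω : H) : ℂ)‖ / (‖(Ψ : H)‖ * ‖(Ω : H)‖))) ∧
      -- equivalence with the chord metric d_chd(ℂΨ, ℂΩ) = inf_{λ ∈ U(1)} ‖Ψ − λΩ‖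
      (∀ Ψ Ω : {v : H // v ≠ 0}, ‖(Ψ : H)‖ = 1 → ‖(Ω : H)‖ = 1 →
        (⨅ lam : Metric.sphere (0 : ℂ) 1, ‖(Ψ : H) - (lam : ℂ) • (Ω : H)‖)
            ≤ m.dist (ProjH.mk Ψ) (ProjH.mk Ω) ∧
          m.dist (ProjH.mk Ψ) (ProjH.mk Ω)
            ≤ (Real.pi * Real.sqrt 2 / 4)
                * ⨅ lam : Metric.sphere (0 : ℂ) 1, ‖(Ψ : H) - (lam : ℂ) • (Ω : H)‖) := by
  classical
  open Real FSAux in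
  refine ⟨{ dist := FSAux.dFS
            dist_self := FSAux.dFS_self
            dist_comm := FSAux.dFS_comm
            dist_triangle := FSAux.dFS_triangle
            eq_of_dist_eq_zero := FSAux.dFS_eq_zero }, ?_, ?_⟩
  · intro Ψ Ω
    rfl
  · intro Ψ Ω hΨ hΩ
    haveI : Nonempty (Metric.sphere (0:ℂ) 1) := ⟨⟨1, by simp⟩⟩
    set z : ℂ := (inner ℂ (Ψ : H) (Ω : H) : ℂ) with hz
    set r : ℝ := ‖z‖ with hr
    have hdist : FSAux.dFS (ProjH.mk Ψ) (ProjH.mk Ω) = Real.arccos r := by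
      show Real.arccos (FSAux.rp (Ψ : H) (Ω : H)) = Real.arccos r
      unfold FSAux.rp
      rw [hΨ, hΩ, one_mul, div_one]
    have hr0 : 0 ≤ r := norm_nonneg _
    have hr1 : r ≤ 1 := by
      have := norm_inner_le_norm (𝕜 := ℂ) (Ψ : H) (Ω : H)
      rwa [hΨ, hΩ, one_mul] at this
    set θ : ℝ := Real.arccos r with hθ
    have hθ0 : 0 ≤ θ := Real.arccos_nonneg r
    have hθpi2 : θ ≤ π / 2 := Real.arccos_le_pi_div_two.2 hr0
    have hcosθ : Real.cos θ = r := Real.cos_arccos (by linarith) hr1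
    -- each chord length ≥ √(2 - 2r)
    have hterm : ∀ lam : Metric.sphere (0:ℂ) 1,
        Real.sqrt (2 - 2*r) ≤ ‖(Ψ : H) - (lam : ℂ) • (Ω : H)‖ := by
      intro lam
      have hlam : ‖(lam : ℂ)‖ = 1 := by
        have := lam.2
        simpa [mem_sphere_iff_norm] using this
      have hsq : ‖(Ψ : H) - (lam : ℂ) • (Ω : H)‖ ^ 2 = 2 - 2 * ((lam : ℂ) * z).re := by
        have h := @norm_sub_sq ℂ H _ _ _ (Ψ : H) ((lam : ℂ) • (Ω : H))
        rw [h, inner_smul_right, norm_smul, hΨ, hΩ, hlam]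
        simp [← hz]
        ring
      have hre : ((lam : ℂ) * z).re ≤ r := by
        calc ((lam : ℂ) * z).re ≤ ‖(lam : ℂ) * z‖ := Complex.re_le_norm _
          _ = r := by rw [norm_mul, hlam, one_mul]
      have h2 : 2 - 2*r ≤ ‖(Ψ : H) - (lam : ℂ) • (Ω : H)‖ ^ 2 := by
        rw [hsq]; linarith
      calc Real.sqrt (2 - 2*r) ≤ Real.sqrt (‖(Ψ : H) - (lam : ℂ) • (Ω : H)‖ ^ 2) :=
            Real.sqrt_le_sqrt h2
        _ = ‖(Ψ : H) - (lam : ℂ) • (Ω : H)‖ := Real.sqrt_sq (norm_nonneg _)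
    have hlb : Real.sqrt (2 - 2*r) ≤
        ⨅ lam : Metric.sphere (0:ℂ) 1, ‖(Ψ : H) - (lam : ℂ) • (Ω : H)‖ :=
      le_ciInf hterm
    -- there is a lam achieving √(2 - 2r)
    obtain ⟨lam₀, hlam₀, hre₀⟩ : ∃ lam₀ : ℂ, ‖lam₀‖ = 1 ∧ (lam₀ * z).re = r := by
      rcases eq_or_ne z 0 with h0 | h0
      · exact ⟨1, by simp, by simp [h0, hr]⟩
      · have hzn : ‖z‖ ≠ 0 := norm_ne_zero_iff.2 h0
        refine ⟨(‖z‖ : ℂ) / z, ?_, ?_⟩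
        · rw [norm_div, Complex.norm_real, Real.norm_eq_abs, abs_norm, div_self hzn]
        · rw [div_mul_cancel₀ _ h0]
          simp [hr]
    have hub : (⨅ lam : Metric.sphere (0:ℂ) 1, ‖(Ψ : H) - (lam : ℂ) • (Ω : H)‖)
        ≤ Real.sqrt (2 - 2*r) := by
      have hmem : lam₀ ∈ Metric.sphere (0:ℂ) 1 := by
        simpa [mem_sphere_iff_norm] using hlam₀
      have hval : ‖(Ψ : H) - lam₀ • (Ω : H)‖ = Real.sqrt (2 - 2*r) := by
        have hsq : ‖(Ψ : H) - lam₀ • (Ω : H)‖ ^ 2 = 2 - 2*r := by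
          have h := @norm_sub_sq ℂ H _ _ _ (Ψ : H) (lam₀ • (Ω : H))
          rw [h, inner_smul_right, norm_smul, hΨ, hΩ, hlam₀]
          have hre' := hre₀
          rw [Complex.mul_re] at hre'
          simp [← hz]
          linarith
        rw [← hsq]
        exact (Real.sqrt_sq (norm_nonneg _)).symm
      have := ciInf_le (f := fun lam : Metric.sphere (0:ℂ) 1 =>
        ‖(Ψ : H) - (lam : ℂ) • (Ω : H)‖) ⟨0, by rintro x ⟨lam, rfl⟩; exact norm_nonneg _⟩
        (⟨lam₀, hmem⟩ : Metric.sphere (0:ℂ) 1)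
      simpa [hval] using this
    -- identify √(2 - 2r) with 2 sin (θ/2)
    have hchord : Real.sqrt (2 - 2*r) = 2 * Real.sin (θ/2) := by
      have h2π : θ ≤ 2 * π := by linarith [Real.pi_pos]
      rw [Real.sin_half_eq_sqrt hθ0 h2π, hcosθ]
      rw [show (2 : ℝ) - 2*r = 4 * ((1 - r)/2) by ring,
        show (4:ℝ) = 2^2 by norm_num, Real.sqrt_mul (by positivity), Real.sqrt_sq (by norm_num)]
    constructor
    · -- chord ≤ d_FS
      show (⨅ lam : Metric.sphere (0:ℂ) 1, ‖(Ψ : H) - (lam : ℂ) • (Ω : H)‖)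
          ≤ FSAux.dFS (ProjH.mk Ψ) (ProjH.mk Ω)
      rw [hdist]
      refine le_trans hub ?_
      rw [hchord]
      have := Real.sin_le (by linarith : 0 ≤ θ/2)
      linarith
    · -- d_FS ≤ (π √2 / 4) * chord
      show FSAux.dFS (ProjH.mk Ψ) (ProjH.mk Ω) ≤ (π * Real.sqrt 2 / 4)
          * ⨅ lam : Metric.sphere (0:ℂ) 1, ‖(Ψ : H) - (lam : ℂ) • (Ω : H)‖
      rw [hdist]
      have hC : (0:ℝ) ≤ π * Real.sqrt 2 / 4 := by positivity
      have hI : 2 * Real.sin (θ/2) ≤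
          ⨅ lam : Metric.sphere (0:ℂ) 1, ‖(Ψ : H) - (lam : ℂ) • (Ω : H)‖ := by
        rw [← hchord]; exact hlb
      have hstep : θ ≤ (π * Real.sqrt 2 / 4) * (2 * Real.sin (θ/2)) := by
        have hlin := FSAux.lin_le_sin (by linarith : 0 ≤ θ/2) (by linarith : θ/2 ≤ π/4)
        nlinarith [Real.sq_sqrt (by norm_num : (0:ℝ) ≤ 2), Real.sqrt_nonneg 2]
      calc θ ≤ (π * Real.sqrt 2 / 4) * (2 * Real.sin (θ/2)) := hstep
        _ ≤ (π * Real.sqrt 2 / 4)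
            * ⨅ lam : Metric.sphere (0:ℂ) 1, ‖(Ψ : H) - (lam : ℂ) • (Ω : H)‖ :=
          mul_le_mul_of_nonneg_left hI hC

end
end

section
/- Let 𝓗 be a nonzero complex Hilbert space and for each ray let P(ℂΨ) denote the orthogonal projection of 𝓗 onto ℂΨ. The gap metric d_gap(ℂΨ, ℂΩ) = ‖P(ℂΨ) − P(ℂΩ)‖ (operator norm) is a metric on ℙ𝓗, and for all Ψ, Ω ∈ 𝓗∖{0}: (1/√2) d_chd(ℂΨ, ℂΩ) ≤ d_gap(ℂΨ, ℂΩ) = √(1 − ⟪ℂΨ, ℂΩ⟫²) ≤ d_chd(ℂΨ, ℂΩ). In particular, the map P : ℙ𝓗 → 𝓑(𝓗) sending a ray to the orthogonal projection onto it is a homeomorphism onto the space of rank-one orthogonal projections with the operator-norm topology. -/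
noncomputable section

/-- `ℙ𝓗` carries the quotient topology induced by the canonical projection. -/
instance (H : Type*) [NormedAddCommGroup H] [InnerProductSpace ℂ H] :
    TopologicalSpace (ProjH H) :=
  TopologicalSpace.coinduced ProjH.mk inferInstance

/-- For a unit vector `Ψ`, the orthogonal projection `|Ψ⟩⟨Ψ| : x ↦ ⟨Ψ, x⟩ Ψ` onto `ℂΨ`. -/
def rankOneProj {H : Type*} [NormedAddCommGroup H] [InnerProductSpace ℂ H] (Ψ : H) :
    H →L[ℂ] H :=
  (innerSL ℂ Ψ).smulRight Ψ


section GapAux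

variable {H : Type*} [NormedAddCommGroup H] [InnerProductSpace ℂ H]

local notation "⟪" x ", " y "⟫" => @inner ℂ _ _ x y

lemma rankOneProj_apply (Ψ x : H) : rankOneProj Ψ x = ⟪Ψ, x⟫ • Ψ := rfl

lemma rankOneProj_smul (c : ℂ) (Ψ : H) :
    rankOneProj (c • Ψ) = (starRingEnd ℂ c * c) • rankOneProj Ψ := by
  ext x
  simp [rankOneProj, inner_smul_left, smul_smul]
  ring_nf

lemma inner_self_one {Ψ : H} (hΨ : ‖Ψ‖ = 1) : ⟪Ψ, Ψ⟫ = 1 := by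
  rw [inner_self_eq_norm_sq_to_K, hΨ]; norm_num

lemma norm_sq_complex (z : ℂ) : (starRingEnd ℂ) z * z = (‖z‖ ^ 2 : ℝ) := by
  rw [mul_comm, Complex.mul_conj]
  norm_cast
  simp [Complex.normSq_eq_norm_sq]

lemma norm_sq_eq_re_inner (v : H) : ‖v‖ ^ 2 = Complex.re ⟪v, v⟫ :=
  InnerProductSpace.norm_sq_eq_re_inner (𝕜 := ℂ) v

lemma key_sq {Ψ Ω : H} (hΨ : ‖Ψ‖ = 1) (hΩ : ‖Ω‖ = 1) (x : H) :
    ‖(rankOneProj Ψ - rankOneProj Ω) x‖ ^ 2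
      = (1 - ‖⟪Ψ, Ω⟫‖ ^ 2) * ‖⟪Ψ, x⟫‖ ^ 2 + ‖⟪Ω - ⟪Ψ, Ω⟫ • Ψ, x⟫‖ ^ 2 := by
  set g := ⟪Ψ, Ω⟫ with hg
  set a := ⟪Ψ, x⟫ with ha
  set b := ⟪Ω, x⟫ with hb
  have hgΩΨ : ⟪Ω, Ψ⟫ = (starRingEnd ℂ) g := by rw [hg, inner_conj_symm]
  have hd : ⟪Ω - g • Ψ, x⟫ = b - (starRingEnd ℂ) g * a := by
    rw [inner_sub_left, inner_smul_left]
  have h1 : ⟪(rankOneProj Ψ - rankOneProj Ω) x, (rankOneProj Ψ - rankOneProj Ω) x⟫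
      = (1 - (starRingEnd ℂ) g * g) * ((starRingEnd ℂ) a * a)
        + (starRingEnd ℂ) (b - (starRingEnd ℂ) g * a) * (b - (starRingEnd ℂ) g * a) := by
    simp only [ContinuousLinearMap.sub_apply, rankOneProj_apply, inner_sub_left,
      inner_sub_right, inner_smul_left, inner_smul_right, inner_self_one hΨ,
      inner_self_one hΩ, hgΩΨ, ← hg, ← ha, ← hb, map_sub, map_mul,
      Complex.conj_conj]
    ring
  rw [norm_sq_eq_re_inner ((rankOneProj Ψ - rankOneProj Ω) x), h1, hd]
  have e1 := norm_sq_complex g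
  have e2 := norm_sq_complex a
  have e3 := norm_sq_complex (b - (starRingEnd ℂ) g * a)
  rw [e1, e2, e3]
  have : (1 - ((‖g‖ ^ 2 : ℝ) : ℂ)) * ((‖a‖ ^ 2 : ℝ) : ℂ) + ((‖b - (starRingEnd ℂ) g * a‖ ^ 2 : ℝ) : ℂ)
      = (((1 - ‖g‖ ^ 2) * ‖a‖ ^ 2 + ‖b - (starRingEnd ℂ) g * a‖ ^ 2 : ℝ) : ℂ) := by
    push_cast; ring
  rw [this, Complex.ofReal_re]

lemma inner_w_perp {Ψ Ω : H} (hΨ : ‖Ψ‖ = 1) : ⟪Ω - ⟪Ψ, Ω⟫ • Ψ, Ψ⟫ = 0 := by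
  rw [inner_sub_left, inner_smul_left, inner_conj_symm, inner_self_one hΨ, mul_one, sub_self]

lemma norm_w_sq {Ψ Ω : H} (hΨ : ‖Ψ‖ = 1) (hΩ : ‖Ω‖ = 1) :
    ‖Ω - ⟪Ψ, Ω⟫ • Ψ‖ ^ 2 = 1 - ‖⟪Ψ, Ω⟫‖ ^ 2 := by
  set g := ⟪Ψ, Ω⟫ with hg
  have h1 : ⟪Ω - g • Ψ, Ω - g • Ψ⟫ = ((1 - ‖g‖ ^ 2 : ℝ) : ℂ) := by
    rw [inner_sub_right, inner_smul_right, inner_w_perp hΨ, mul_zero, sub_zero]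
    have h2 : ⟪Ω - g • Ψ, Ω⟫ = 1 - (starRingEnd ℂ) g * g := by
      rw [inner_sub_left, inner_smul_left, inner_self_one hΩ, ← hg]
    rw [h2, norm_sq_complex]
    push_cast; ring
  rw [_root_.norm_sq_eq_re_inner, h1, Complex.ofReal_re]

lemma norm_x_sub_proj_sq {Ψ : H} (hΨ : ‖Ψ‖ = 1) (x : H) :
    ‖x - ⟪Ψ, x⟫ • Ψ‖ ^ 2 = ‖x‖ ^ 2 - ‖⟪Ψ, x⟫‖ ^ 2 := by
  set a := ⟪Ψ, x⟫ with ha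
  have horth : ⟪a • Ψ, x - a • Ψ⟫ = 0 := by
    rw [inner_smul_left, inner_sub_right, inner_smul_right, ← ha, inner_self_one hΨ,
      mul_one, sub_self, mul_zero]
  have h := norm_add_sq_eq_norm_sq_add_norm_sq_of_inner_eq_zero _ _ horth
  have hx : a • Ψ + (x - a • Ψ) = x := by abel
  rw [hx] at h
  have hna : ‖a • Ψ‖ = ‖a‖ := by rw [norm_smul, hΨ, mul_one]
  rw [hna] at h
  nlinarith [h]

lemma norm_rankOneProj_sub {Ψ Ω : H} (hΨ : ‖Ψ‖ = 1) (hΩ : ‖Ω‖ = 1) :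
    ‖rankOneProj Ψ - rankOneProj Ω‖ = Real.sqrt (1 - ‖⟪Ψ, Ω⟫‖ ^ 2) := by
  set g := ⟪Ψ, Ω⟫ with hg
  have ht : ‖g‖ ≤ 1 := by
    have := norm_inner_le_norm (𝕜 := ℂ) Ψ Ω
    rwa [hΨ, hΩ, mul_one] at this
  have ht0 : (0:ℝ) ≤ 1 - ‖g‖ ^ 2 := by nlinarith [norm_nonneg g]
  apply le_antisymm
  · apply ContinuousLinearMap.opNorm_le_bound _ (Real.sqrt_nonneg _)
    intro x
    have hkey := key_sq hΨ hΩ x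
    set a := ⟪Ψ, x⟫ with ha
    set d := ⟪Ω - g • Ψ, x⟫ with hd
    have hdintro : d = ⟪Ω - g • Ψ, x - a • Ψ⟫ := by
      rw [hd, inner_sub_right, inner_smul_right, inner_w_perp hΨ, mul_zero, sub_zero]
    have hdle : ‖d‖ ≤ ‖Ω - g • Ψ‖ * ‖x - a • Ψ‖ := by
      rw [hdintro]; exact norm_inner_le_norm (𝕜 := ℂ) _ _
    have hd2 : ‖d‖ ^ 2 ≤ (1 - ‖g‖ ^ 2) * (‖x‖ ^ 2 - ‖a‖ ^ 2) := by
      have h1 := norm_w_sq hΨ hΩ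
      have h2 := norm_x_sub_proj_sq hΨ x
      nlinarith [norm_nonneg d, norm_nonneg (Ω - g • Ψ), norm_nonneg (x - a • Ψ),
        hdle, sq_nonneg (‖Ω - g • Ψ‖ * ‖x - a • Ψ‖)]
    have hTx2 : ‖(rankOneProj Ψ - rankOneProj Ω) x‖ ^ 2 ≤ (1 - ‖g‖ ^ 2) * ‖x‖ ^ 2 := by
      nlinarith [hkey]
    calc ‖(rankOneProj Ψ - rankOneProj Ω) x‖
        = Real.sqrt (‖(rankOneProj Ψ - rankOneProj Ω) x‖ ^ 2) :=
          (Real.sqrt_sq (norm_nonneg _)).symm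
      _ ≤ Real.sqrt ((1 - ‖g‖ ^ 2) * ‖x‖ ^ 2) := Real.sqrt_le_sqrt hTx2
      _ = Real.sqrt (1 - ‖g‖ ^ 2) * ‖x‖ := by
          rw [Real.sqrt_mul ht0, Real.sqrt_sq (norm_nonneg _)]
  · have hTΨ : ‖(rankOneProj Ψ - rankOneProj Ω) Ψ‖ ^ 2 = 1 - ‖g‖ ^ 2 := by
      have := key_sq hΨ hΩ Ψ
      rw [inner_self_one hΨ] at this
      rw [this, ← hg, inner_w_perp hΨ]
      simp
    have h1 : ‖(rankOneProj Ψ - rankOneProj Ω) Ψ‖ = Real.sqrt (1 - ‖g‖ ^ 2) := by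
      rw [← hTΨ, Real.sqrt_sq (norm_nonneg _)]
    calc Real.sqrt (1 - ‖g‖ ^ 2) = ‖(rankOneProj Ψ - rankOneProj Ω) Ψ‖ := h1.symm
      _ ≤ ‖rankOneProj Ψ - rankOneProj Ω‖ * ‖Ψ‖ := ContinuousLinearMap.le_opNorm _ _
      _ = ‖rankOneProj Ψ - rankOneProj Ω‖ := by rw [hΨ, mul_one]

lemma norm_sub_smul_sq {Ψ Ω : H} (hΨ : ‖Ψ‖ = 1) (hΩ : ‖Ω‖ = 1) {lam : ℂ} (hlam : ‖lam‖ = 1) :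
    ‖Ψ - lam • Ω‖ ^ 2 = 2 - 2 * Complex.re (lam * ⟪Ψ, Ω⟫) := by
  have hll : (starRingEnd ℂ) lam * lam = 1 := by
    rw [norm_sq_complex, hlam]; norm_num
  have h1 : ⟪Ψ - lam • Ω, Ψ - lam • Ω⟫
      = 2 - (lam * ⟪Ψ, Ω⟫ + (starRingEnd ℂ) (lam * ⟪Ψ, Ω⟫)) := by
    rw [inner_sub_left, inner_sub_right, inner_sub_right, inner_smul_left, inner_smul_right,
      inner_smul_left, inner_smul_right, inner_self_one hΨ, inner_self_one hΩ,
      ← inner_conj_symm Ψ Ω, map_mul, Complex.conj_conj]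
    ring_nf
    rw [mul_comm lam ((starRingEnd ℂ) lam), hll]
    ring
  rw [_root_.norm_sq_eq_re_inner, h1]
  set z := lam * ⟪Ψ, Ω⟫ with hz
  have h2 : Complex.re ((2:ℂ) - (z + (starRingEnd ℂ) z)) = 2 - 2 * z.re := by
    simp only [Complex.sub_re, Complex.add_re, Complex.conj_re, Complex.re_ofNat]
    ring
  rw [h2]

lemma chord_lower {Ψ Ω : H} (hΨ : ‖Ψ‖ = 1) (hΩ : ‖Ω‖ = 1) {lam : ℂ} (hlam : ‖lam‖ = 1) :
    Real.sqrt (2 - 2 * ‖⟪Ψ, Ω⟫‖) ≤ ‖Ψ - lam • Ω‖ := by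
  have h1 := norm_sub_smul_sq hΨ hΩ hlam
  have h2 : Complex.re (lam * ⟪Ψ, Ω⟫) ≤ ‖⟪Ψ, Ω⟫‖ := by
    calc Complex.re (lam * ⟪Ψ, Ω⟫) ≤ ‖lam * ⟪Ψ, Ω⟫‖ := Complex.re_le_norm _
      _ = ‖⟪Ψ, Ω⟫‖ := by rw [norm_mul, hlam, one_mul]
  calc Real.sqrt (2 - 2 * ‖⟪Ψ, Ω⟫‖) ≤ Real.sqrt (‖Ψ - lam • Ω‖ ^ 2) := by
        apply Real.sqrt_le_sqrt; rw [h1]; linarith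
    _ = ‖Ψ - lam • Ω‖ := Real.sqrt_sq (norm_nonneg _)

lemma chord_witness {Ψ Ω : H} (hΨ : ‖Ψ‖ = 1) (hΩ : ‖Ω‖ = 1) :
    ∃ lam : ℂ, ‖lam‖ = 1 ∧ ‖Ψ - lam • Ω‖ = Real.sqrt (2 - 2 * ‖⟪Ψ, Ω⟫‖) := by
  set g := ⟪Ψ, Ω⟫ with hg
  by_cases hg0 : g = 0
  · refine ⟨1, by norm_num, ?_⟩
    have h1 := norm_sub_smul_sq hΨ hΩ (lam := 1) (by norm_num)
    rw [← hg, hg0, mul_zero, Complex.zero_re] at h1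
    norm_num at h1
    rw [one_smul, ← Real.sqrt_sq (norm_nonneg (Ψ - Ω)), h1, hg0, norm_zero]
    norm_num
  · refine ⟨(starRingEnd ℂ) g * ((‖g‖ : ℝ) : ℂ)⁻¹, ?_, ?_⟩
    · rw [norm_mul, RCLike.norm_conj, norm_inv, Complex.norm_real, Real.norm_eq_abs,
        abs_of_nonneg (norm_nonneg g), mul_inv_cancel₀ (norm_ne_zero_iff.mpr hg0)]
    · have hlam : ‖(starRingEnd ℂ) g * ((‖g‖ : ℝ) : ℂ)⁻¹‖ = 1 := by
        rw [norm_mul, RCLike.norm_conj, norm_inv, Complex.norm_real, Real.norm_eq_abs,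
          abs_of_nonneg (norm_nonneg g), mul_inv_cancel₀ (norm_ne_zero_iff.mpr hg0)]
      have h1 := norm_sub_smul_sq hΨ hΩ hlam
      have h2 : (starRingEnd ℂ) g * ((‖g‖ : ℝ) : ℂ)⁻¹ * g = ((‖g‖ : ℝ) : ℂ) := by
        rw [mul_comm ((starRingEnd ℂ) g) _, mul_assoc, norm_sq_complex]
        rw [inv_mul_eq_div, div_eq_iff (by exact_mod_cast norm_ne_zero_iff.mpr hg0)]
        push_cast; ring
      rw [← hg, h2] at h1
      simp only [Complex.ofReal_re] at h1
      rw [← Real.sqrt_sq (norm_nonneg _), h1]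

instance : Nonempty (Metric.sphere (0:ℂ) 1) := ⟨⟨1, by simp⟩⟩

lemma chord_inf {Ψ Ω : H} (hΨ : ‖Ψ‖ = 1) (hΩ : ‖Ω‖ = 1) :
    (⨅ lam : Metric.sphere (0 : ℂ) 1, ‖Ψ - (lam : ℂ) • Ω‖)
      = Real.sqrt (2 - 2 * ‖⟪Ψ, Ω⟫‖) := by
  have hbdd : BddBelow (Set.range fun lam : Metric.sphere (0:ℂ) 1 => ‖Ψ - (lam : ℂ) • Ω‖) := by
    refine ⟨0, ?_⟩
    rintro x ⟨lam, rfl⟩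
    exact norm_nonneg _
  apply le_antisymm
  · obtain ⟨lam, hl, he⟩ := chord_witness hΨ hΩ
    have hmem : lam ∈ Metric.sphere (0:ℂ) 1 := by simpa using hl
    exact he ▸ ciInf_le hbdd (⟨lam, hmem⟩ : Metric.sphere (0:ℂ) 1)
  · apply le_ciInf
    intro lam
    exact chord_lower hΨ hΩ (by simpa using lam.2)

lemma rank_lip {u v : H} (hu : ‖u‖ = 1) (hv : ‖v‖ = 1) :
    ‖rankOneProj u - rankOneProj v‖ ≤ ‖u - v‖ := by
  rw [norm_rankOneProj_sub hu hv]
  have h1 : ‖u - v‖ ^ 2 = 2 - 2 * Complex.re ⟪u, v⟫ := by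
    have := norm_sub_smul_sq hu hv (lam := 1) (by norm_num)
    rw [one_smul, one_mul] at this
    exact this
  have hre : Complex.re ⟪u, v⟫ ≤ ‖⟪u, v⟫‖ := Complex.re_le_norm _
  have ht1 : ‖⟪u, v⟫‖ ≤ 1 := by
    have := norm_inner_le_norm (𝕜 := ℂ) u v
    rwa [hu, hv, mul_one] at this
  calc Real.sqrt (1 - ‖⟪u, v⟫‖ ^ 2) ≤ Real.sqrt (‖u - v‖ ^ 2) := by
        apply Real.sqrt_le_sqrt; rw [h1]; nlinarith [norm_nonneg (⟪u, v⟫ : ℂ)]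
    _ = ‖u - v‖ := Real.sqrt_sq (norm_nonneg _)

/-- Normalize a nonzero vector to a unit vector. -/
def unitize (Ψ : {v : H // v ≠ 0}) : {v : H // v ≠ 0} :=
  ⟨((‖(Ψ : H)‖⁻¹ : ℝ) : ℂ) • (Ψ : H), by
    have h1 : ‖(Ψ : H)‖ ≠ 0 := norm_ne_zero_iff.mpr Ψ.2
    simp [smul_eq_zero, Ψ.2, h1]⟩

lemma unitize_coe (Ψ : {v : H // v ≠ 0}) :
    (unitize Ψ : H) = ((‖(Ψ : H)‖⁻¹ : ℝ) : ℂ) • (Ψ : H) := rfl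

lemma norm_unitize (Ψ : {v : H // v ≠ 0}) : ‖(unitize Ψ : H)‖ = 1 := by
  have h1 : ‖(Ψ : H)‖ ≠ 0 := norm_ne_zero_iff.mpr Ψ.2
  rw [unitize_coe, norm_smul, Complex.norm_real, Real.norm_eq_abs,
    abs_of_nonneg (inv_nonneg.mpr (norm_nonneg _)), inv_mul_cancel₀ h1]

lemma mk_unitize (Ψ : {v : H // v ≠ 0}) : ProjH.mk (unitize Ψ) = ProjH.mk Ψ := by
  apply Quotient.sound
  refine ⟨((‖(Ψ : H)‖ : ℝ) : ℂ), ?_⟩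
  rw [unitize_coe, smul_smul]
  have h1 : ‖(Ψ : H)‖ ≠ 0 := norm_ne_zero_iff.mpr Ψ.2
  rw [← Complex.ofReal_mul, mul_inv_cancel₀ h1]
  simp

lemma rankOneProj_eq_of_unit {u v : H} (hu : ‖u‖ = 1) (hv : ‖v‖ = 1) (c : ℂ)
    (h : v = c • u) : rankOneProj v = rankOneProj u := by
  have hc : ‖c‖ = 1 := by
    rw [h, norm_smul, hu, mul_one] at hv; exact hv
  rw [h, rankOneProj_smul, norm_sq_complex, hc]
  norm_num

/-- The (representative-level) projection map. -/
def Pmap (Ψ : {v : H // v ≠ 0}) : H →L[ℂ] H := rankOneProj (unitize Ψ : H)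

lemma Pmap_wd (Ψ Ω : {v : H // v ≠ 0}) (h : (projSetoid H).r Ψ Ω) : Pmap Ψ = Pmap Ω := by
  obtain ⟨c, hc⟩ := h
  have h1 : ‖(Ψ : H)‖ ≠ 0 := norm_ne_zero_iff.mpr Ψ.2
  have key : (unitize Ω : H)
      = (((‖(Ω : H)‖⁻¹ : ℝ) : ℂ) * c * ((‖(Ψ : H)‖ : ℝ) : ℂ)) • (unitize Ψ : H) := by
    rw [unitize_coe, unitize_coe, hc, smul_smul, smul_smul]
    congr 1
    rw [mul_assoc, ← Complex.ofReal_mul, mul_inv_cancel₀ h1]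
    simp
  exact (rankOneProj_eq_of_unit (norm_unitize Ψ) (norm_unitize Ω) _ key).symm

/-- The projection map on the projective space. -/
def Pquot : ProjH H → (H →L[ℂ] H) :=
  Quotient.lift Pmap (fun a b h => Pmap_wd a b h)

lemma Pquot_mk (Ψ : {v : H // v ≠ 0}) : Pquot (ProjH.mk Ψ) = Pmap Ψ := rfl

lemma unitize_of_unit {Ψ : {v : H // v ≠ 0}} (h : ‖(Ψ : H)‖ = 1) : unitize Ψ = Ψ :=
  Subtype.ext (by rw [unitize_coe, h]; simp)

lemma Pquot_mk_unit {Ψ : {v : H // v ≠ 0}} (h : ‖(Ψ : H)‖ = 1) :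
    Pquot (ProjH.mk Ψ) = rankOneProj (Ψ : H) := by
  rw [Pquot_mk]
  unfold Pmap
  rw [unitize_of_unit h]

lemma Pquot_inj : Function.Injective (Pquot : ProjH H → (H →L[ℂ] H)) := by
  intro A B
  refine Quotient.inductionOn₂ A B ?_
  intro Ψ Ω h
  have hu := norm_unitize Ψ
  have hv := norm_unitize Ω
  have happ : rankOneProj (unitize Ψ : H) (unitize Ψ : H)
      = rankOneProj (unitize Ω : H) (unitize Ψ : H) := by
    have h' : Pmap Ψ = Pmap Ω := h
    rw [show Pmap Ψ = rankOneProj (unitize Ψ : H) from rfl,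
      show Pmap Ω = rankOneProj (unitize Ω : H) from rfl] at h'
    rw [h']
  rw [rankOneProj_apply, rankOneProj_apply, inner_self_one hu, one_smul] at happ
  have step : ProjH.mk (unitize Ω) = ProjH.mk (unitize Ψ) :=
    Quotient.sound ⟨_, happ⟩
  show ProjH.mk Ψ = ProjH.mk Ω
  calc ProjH.mk Ψ = ProjH.mk (unitize Ψ) := (mk_unitize Ψ).symm
    _ = ProjH.mk (unitize Ω) := step.symm
    _ = ProjH.mk Ω := mk_unitize Ω

/-- The gap metric. -/
def gapMetric : MetricSpace (ProjH H) :=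
  MetricSpace.induced Pquot Pquot_inj inferInstance

lemma gapMetric_dist (A B : ProjH H) :
    (gapMetric (H := H)).dist A B = ‖Pquot A - Pquot B‖ :=
  dist_eq_norm (Pquot A) (Pquot B)

lemma gap_dist_mk (Ψ Ω : {v : H // v ≠ 0}) :
    (gapMetric (H := H)).dist (ProjH.mk Ψ) (ProjH.mk Ω)
      = Real.sqrt (1 - ‖⟪(unitize Ψ : H), (unitize Ω : H)⟫‖ ^ 2) := by
  rw [gapMetric_dist, Pquot_mk, Pquot_mk]
  exact norm_rankOneProj_sub (norm_unitize Ψ) (norm_unitize Ω)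

lemma pmap_cont : Continuous (Pmap : {v : H // v ≠ 0} → (H →L[ℂ] H)) := by
  have hu : Continuous (fun Ψ : {v : H // v ≠ 0} => (unitize Ψ : H)) := by
    apply Continuous.smul
    · exact Complex.continuous_ofReal.comp
        ((continuous_norm.comp continuous_subtype_val).inv₀
          fun Ψ => norm_ne_zero_iff.mpr Ψ.2)
    · exact continuous_subtype_val
  rw [Metric.continuous_iff]
  intro Ψ ε hε
  obtain ⟨δ, hδ, hball⟩ := Metric.continuous_iff.mp hu Ψ ε hε
  refine ⟨δ, hδ, fun Φ hΦ => ?_⟩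
  have h1 : dist (Pmap Φ) (Pmap Ψ) ≤ dist ((unitize Φ : H)) ((unitize Ψ : H)) := by
    rw [dist_eq_norm, dist_eq_norm]
    exact rank_lip (norm_unitize Φ) (norm_unitize Ψ)
  exact lt_of_le_of_lt h1 (hball Φ hΦ)

end GapAux

/-- The gap metric `d_gap(ℂΨ, ℂΩ) = ‖P(ℂΨ) − P(ℂΩ)‖` is a metric on `ℙ𝓗`; it equals
`√(1 − ⟪ℂΨ, ℂΩ⟫²)` and satisfies `(1/√2) d_chd ≤ d_gap ≤ d_chd`. In particular the map
`P : ℙ𝓗 → 𝓑(𝓗)` sending a ray to the orthogonal projection onto it is a homeomorphism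
onto the set of rank-one orthogonal projections with the operator-norm topology. -/
theorem gap_metric (H : Type*) [NormedAddCommGroup H] [InnerProductSpace ℂ H]
    [CompleteSpace H] [Nontrivial H] :
    ∃ m : MetricSpace (ProjH H),
      -- defining formula on unit representatives
      (∀ Ψ Ω : {v : H // v ≠ 0}, ‖(Ψ : H)‖ = 1 → ‖(Ω : H)‖ = 1 →
        m.dist (ProjH.mk Ψ) (ProjH.mk Ω)
          = ‖rankOneProj (Ψ : H) - rankOneProj (Ω : H)‖) ∧
      -- d_gap = √(1 − ⟪ℂΨ, ℂΩ⟫²)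
      (∀ Ψ Ω : {v : H // v ≠ 0},
        m.dist (ProjH.mk Ψ) (ProjH.mk Ω)
          = Real.sqrt (1 - (‖(inner ℂ (Ψ : H) (Ω : H) : ℂ)‖ / (‖(Ψ : H)‖ * ‖(Ω : H)‖)) ^ 2)) ∧
      -- equivalence with the chord metric
      (∀ Ψ Ω : {v : H // v ≠ 0}, ‖(Ψ : H)‖ = 1 → ‖(Ω : H)‖ = 1 →
        (1 / Real.sqrt 2)
            * (⨅ lam : Metric.sphere (0 : ℂ) 1, ‖(Ψ : H) - (lam : ℂ) • (Ω : H)‖)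
            ≤ m.dist (ProjH.mk Ψ) (ProjH.mk Ω) ∧
          m.dist (ProjH.mk Ψ) (ProjH.mk Ω)
            ≤ ⨅ lam : Metric.sphere (0 : ℂ) 1, ‖(Ψ : H) - (lam : ℂ) • (Ω : H)‖) ∧
      -- P is a homeomorphism onto the rank-one orthogonal projections
      ∃ P : ProjH H → (H →L[ℂ] H),
        (∀ Ψ : {v : H // v ≠ 0}, ‖(Ψ : H)‖ = 1 → P (ProjH.mk Ψ) = rankOneProj (Ψ : H)) ∧
        Topology.IsEmbedding P ∧
        Set.range P = {T : H →L[ℂ] H | ∃ Ψ : H, ‖Ψ‖ = 1 ∧ T = rankOneProj Ψ} := by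
  classical
  refine ⟨gapMetric, ?_, ?_, ?_, ?_⟩
  · -- defining formula on unit representatives
    intro Ψ Ω hΨ hΩ
    rw [gapMetric_dist, Pquot_mk_unit hΨ, Pquot_mk_unit hΩ]
  · -- the √(1 - r²) formula
    intro Ψ Ω
    rw [gap_dist_mk]
    congr 1
    have hΨ0 : ‖(Ψ : H)‖ ≠ 0 := norm_ne_zero_iff.mpr Ψ.2
    have hΩ0 : ‖(Ω : H)‖ ≠ 0 := norm_ne_zero_iff.mpr Ω.2
    have hinner : (inner ℂ ((unitize Ψ : H)) ((unitize Ω : H)) : ℂ)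
        = (((‖(Ψ : H)‖⁻¹ * ‖(Ω : H)‖⁻¹ : ℝ)) : ℂ) * (inner ℂ (Ψ : H) (Ω : H) : ℂ) := by
      rw [unitize_coe, unitize_coe, inner_smul_left, inner_smul_right, Complex.conj_ofReal]
      push_cast
      ring
    rw [hinner, norm_mul, Complex.norm_real, Real.norm_eq_abs,
      abs_of_nonneg (by positivity), div_eq_mul_inv, mul_inv]
    ring
  · -- chord metric comparison
    intro Ψ Ω hΨ hΩ
    set t := ‖(inner ℂ (Ψ : H) (Ω : H) : ℂ)‖ with htdef
    have ht1 : t ≤ 1 := by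
      have := norm_inner_le_norm (𝕜 := ℂ) (Ψ : H) (Ω : H)
      rwa [hΨ, hΩ, mul_one] at this
    have ht0 : 0 ≤ t := norm_nonneg _
    have hdist : (gapMetric (H := H)).dist (ProjH.mk Ψ) (ProjH.mk Ω)
        = Real.sqrt (1 - t ^ 2) := by
      rw [gapMetric_dist, Pquot_mk_unit hΨ, Pquot_mk_unit hΩ]
      exact norm_rankOneProj_sub hΨ hΩ
    have hinf := chord_inf (Ψ := (Ψ : H)) (Ω := (Ω : H)) hΨ hΩ
    constructor
    · rw [hdist, hinf]
      have h2 : 1 / Real.sqrt 2 * Real.sqrt (2 - 2 * t) = Real.sqrt (1 - t) := by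
        rw [one_div, inv_mul_eq_div, ← Real.sqrt_div (by linarith : (0:ℝ) ≤ 2 - 2 * t) 2]
        congr 1
        ring
      rw [h2]
      exact Real.sqrt_le_sqrt (by nlinarith)
    · rw [hdist, hinf]
      exact Real.sqrt_le_sqrt (by nlinarith)
  · -- the homeomorphism
    refine ⟨Pquot, fun Ψ hΨ => Pquot_mk_unit hΨ, ?_, ?_⟩
    · refine ⟨⟨?_⟩, Pquot_inj⟩
      apply le_antisymm
      · exact coinduced_le_iff_le_induced.mpr
          (le_trans (continuous_iff_le_induced.mp pmap_cont) (le_of_eq ((induced_compose (f := ProjH.mk) (g := Pquot)).symm)))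
      · -- induced ≤ coinduced
        rw [TopologicalSpace.le_def]
        intro U hU
        have hU' : IsOpen (ProjH.mk ⁻¹' U) := hU
        have claim : ∀ A ∈ U, ∃ ε > 0, ∀ B, dist (Pquot B) (Pquot A) < ε → B ∈ U := by
          intro A hA
          obtain ⟨Ψ₀, rfl⟩ := Quotient.exists_rep A
          have hu := norm_unitize Ψ₀
          have hmem : unitize Ψ₀ ∈ ProjH.mk ⁻¹' U := by
            show ProjH.mk (unitize Ψ₀) ∈ U
            rw [mk_unitize]
            exact hA
          obtain ⟨δ, hδ, hball⟩ := Metric.isOpen_iff.mp hU' (unitize Ψ₀) hmem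
          refine ⟨δ / Real.sqrt 2, by positivity, ?_⟩
          intro B hB
          obtain ⟨Ω₀, rfl⟩ := Quotient.exists_rep B
          have hv := norm_unitize Ω₀
          set t := ‖(inner ℂ ((unitize Ψ₀ : H)) ((unitize Ω₀ : H)) : ℂ)‖ with htdef
          have ht1 : t ≤ 1 := by
            have := norm_inner_le_norm (𝕜 := ℂ) (unitize Ψ₀ : H) (unitize Ω₀ : H)
            rwa [hu, hv, mul_one] at this
          have ht0 : 0 ≤ t := norm_nonneg _
          have hdist : dist (Pquot (ProjH.mk Ω₀)) (Pquot (ProjH.mk Ψ₀))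
              = Real.sqrt (1 - t ^ 2) := by
            rw [Pquot_mk, Pquot_mk, dist_eq_norm]
            show ‖rankOneProj (unitize Ω₀ : H) - rankOneProj (unitize Ψ₀ : H)‖ = _
            rw [norm_rankOneProj_sub hv hu, norm_inner_symm]
          obtain ⟨lam, hlam, hchord⟩ := chord_witness hu hv
          have hB' : Real.sqrt (1 - t ^ 2) < δ / Real.sqrt 2 := by
            rw [← hdist]; exact hB
          have hlt : ‖(unitize Ψ₀ : H) - lam • (unitize Ω₀ : H)‖ < δ := by
            rw [hchord]
            have h2 : Real.sqrt (2 - 2 * t) ≤ Real.sqrt 2 * Real.sqrt (1 - t ^ 2) := by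
              rw [← Real.sqrt_mul (by norm_num : (0:ℝ) ≤ 2)]
              exact Real.sqrt_le_sqrt (by nlinarith)
            have hs2 : (0:ℝ) < Real.sqrt 2 := by positivity
            calc Real.sqrt (2 - 2 * t) ≤ Real.sqrt 2 * Real.sqrt (1 - t ^ 2) := h2
              _ < Real.sqrt 2 * (δ / Real.sqrt 2) := by
                  exact mul_lt_mul_of_pos_left hB' hs2
              _ = δ := by field_simp
          have hlamne : lam • (unitize Ω₀ : H) ≠ 0 :=
            smul_ne_zero (by intro h; rw [h, norm_zero] at hlam; norm_num at hlam)
              (unitize Ω₀).2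
          have hin : (⟨lam • (unitize Ω₀ : H), hlamne⟩ : {v : H // v ≠ 0})
              ∈ Metric.ball (unitize Ψ₀) δ := by
            rw [Metric.mem_ball, Subtype.dist_eq, dist_eq_norm, norm_sub_rev]
            exact hlt
          have hin2 := hball hin
          have heq : ProjH.mk (⟨lam • (unitize Ω₀ : H), hlamne⟩ : {v : H // v ≠ 0})
              = ProjH.mk Ω₀ := by
            calc ProjH.mk (⟨lam • (unitize Ω₀ : H), hlamne⟩ : {v : H // v ≠ 0})
                = ProjH.mk (unitize Ω₀) :=
                  (Quotient.sound (⟨lam, rfl⟩ :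
                    (projSetoid H).r (unitize Ω₀)
                      ⟨lam • (unitize Ω₀ : H), hlamne⟩)).symm
              _ = ProjH.mk Ω₀ := mk_unitize Ω₀
          show ProjH.mk Ω₀ ∈ U
          rw [← heq]
          exact hin2
        choose! ε hεpos hεball using claim
        show @IsOpen _ (TopologicalSpace.induced Pquot inferInstance) U
        rw [isOpen_induced_iff]
        refine ⟨⋃ A ∈ U, Metric.ball (Pquot A) (ε A),
          isOpen_biUnion fun _ _ => Metric.isOpen_ball, ?_⟩
        ext B
        simp only [Set.mem_preimage, Set.mem_iUnion, Metric.mem_ball, exists_prop]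
        constructor
        · rintro ⟨A, hA, hdist⟩
          exact hεball A hA B hdist
        · intro hB
          refine ⟨B, hB, ?_⟩
          rw [dist_self]
          exact hεpos B hB
    · ext T
      simp only [Set.mem_range, Set.mem_setOf_eq]
      constructor
      · rintro ⟨A, rfl⟩
        obtain ⟨Ψ, rfl⟩ := Quotient.exists_rep A
        exact ⟨(unitize Ψ : H), norm_unitize Ψ, rfl⟩
      · rintro ⟨Ψ, hΨ, rfl⟩
        have hne : Ψ ≠ 0 := by intro h; rw [h, norm_zero] at hΨ; norm_num at hΨ
        exact ⟨ProjH.mk ⟨Ψ, hne⟩, Pquot_mk_unit hΨ⟩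


end
end

section
/- Let 𝓗 be a nonzero complex Hilbert space and Ψ ∈ 𝕊𝓗, and let 𝔹₁(ℂΨ) be the open unit ball around ℂΨ in ℙ𝓗 with respect to the gap metric (equivalently, 𝔹₁(ℂΨ) = {ℂΩ : ⟨Ψ, Ω⟩ ≠ 0}). Then the maps σ_Ψ : 𝕊𝓗 ∖ (𝕊𝓗 ∩ (ℂΨ)^⊥) → (ℂΨ)^⊥ × U(1) given by σ_Ψ(Ω) = (Ω/⟨Ψ,Ω⟩ − Ψ, ⟨Ψ,Ω⟩/|⟨Ψ,Ω⟩|), and τ_Ψ : 𝔹₁(ℂΨ) → (ℂΨ)^⊥ given by τ_Ψ(ℂΩ) = Ω/⟨Ψ,Ω⟩ − Ψ (where Ω is any nonzero representative), are well-defined homeomorphisms; the inverses are σ_Ψ⁻¹(Φ, λ) = λ(Φ + Ψ)/√(1 + ‖Φ‖²) and τ_Ψ⁻¹(Φ) = ℂ(Φ + Ψ). -/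
noncomputable section

namespace PCharts

open Submodule

variable {H : Type*} [NormedAddCommGroup H] [InnerProductSpace ℂ H]

local notation "⟪" x ", " y "⟫" => @inner ℂ _ _ x y

def chart (Ψ v : H) : H := (⟪Ψ, v⟫)⁻¹ • v - Ψ

lemma inner_psi_psi {Ψ : H} (hΨ : ‖Ψ‖ = 1) : ⟪Ψ, Ψ⟫ = 1 := by
  rw [inner_self_eq_norm_sq_to_K, hΨ]; norm_num

lemma chart_mem {Ψ : H} (hΨ : ‖Ψ‖ = 1) {v : H} (hv : ⟪Ψ, v⟫ ≠ 0) :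
    chart Ψ v ∈ (span ℂ ({Ψ} : Set H))ᗮ := by
  rw [show (span ℂ ({Ψ} : Set H)) = ℂ ∙ Ψ from rfl,
    Submodule.mem_orthogonal_singleton_iff_inner_right]
  rw [chart, inner_sub_right, inner_smul_right, inner_psi_psi hΨ, inv_mul_cancel₀ hv, sub_self]

lemma inner_orth {Ψ : H} {Φ : H} (hΦ : Φ ∈ (span ℂ ({Ψ} : Set H))ᗮ) : ⟪Ψ, Φ⟫ = 0 :=
  Submodule.mem_orthogonal_singleton_iff_inner_right.mp hΦ

lemma inner_add_psi {Ψ Φ : H} (hΨ : ‖Ψ‖ = 1) (hΦ : Φ ∈ (span ℂ ({Ψ} : Set H))ᗮ) :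
    ⟪Ψ, Φ + Ψ⟫ = 1 := by
  rw [inner_add_right, inner_orth hΦ, inner_psi_psi hΨ, zero_add]

lemma pythag {Ψ Φ : H} (hΨ : ‖Ψ‖ = 1) (hΦ : Φ ∈ (span ℂ ({Ψ} : Set H))ᗮ) :
    ‖Φ + Ψ‖ ^ 2 = ‖Φ‖ ^ 2 + 1 := by
  have h : ⟪Φ, Ψ⟫ = 0 := by
    rw [← inner_conj_symm, inner_orth hΦ, map_zero]
  have := norm_add_sq_eq_norm_sq_add_norm_sq_of_inner_eq_zero Φ Ψ h
  rw [hΨ] at this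
  nlinarith [this]

lemma norm_add_psi {Ψ Φ : H} (hΨ : ‖Ψ‖ = 1) (hΦ : Φ ∈ (span ℂ ({Ψ} : Set H))ᗮ) :
    ‖Φ + Ψ‖ = Real.sqrt (1 + ‖Φ‖ ^ 2) := by
  rw [show (1 + ‖Φ‖^2) = ‖Φ + Ψ‖^2 by rw [pythag hΨ hΦ]; ring]
  exact (Real.sqrt_sq (norm_nonneg _)).symm

omit [InnerProductSpace ℂ H] in
lemma sqrt_pos' (Φ : H) : 0 < Real.sqrt (1 + ‖Φ‖ ^ 2) :=
  Real.sqrt_pos.mpr (by positivity)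

/-- inner product of Ψ with the inverse-map vector -/
lemma inner_inv (Ψ : H) (hΨ : ‖Ψ‖ = 1) (Φ : ↥((span ℂ ({Ψ} : Set H))ᗮ))
    (lam : Metric.sphere (0 : ℂ) 1) :
    ⟪Ψ, ((Real.sqrt (1 + ‖(Φ : H)‖ ^ 2) : ℂ))⁻¹ • ((lam : ℂ) • ((Φ : H) + Ψ))⟫
      = ((Real.sqrt (1 + ‖(Φ : H)‖ ^ 2) : ℂ))⁻¹ * (lam : ℂ) := by
  rw [inner_smul_right, inner_smul_right, inner_add_psi hΨ Φ.2, mul_one]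

lemma lam_ne (lam : Metric.sphere (0 : ℂ) 1) : (lam : ℂ) ≠ 0 := by
  have := lam.2
  rw [mem_sphere_iff_norm, sub_zero] at this
  intro h; rw [h] at this; simp at this

lemma sqrtC_ne (Φ : H) : ((Real.sqrt (1 + ‖Φ‖ ^ 2) : ℝ) : ℂ) ≠ 0 := by
  exact_mod_cast (sqrt_pos' Φ).ne'

def sigmaEquiv (Ψ : H) (hΨ : ‖Ψ‖ = 1) :
    {Ω : H // ‖Ω‖ = 1 ∧ (inner ℂ Ψ Ω : ℂ) ≠ 0} ≃
      (↥((Submodule.span ℂ ({Ψ} : Set H))ᗮ) × Metric.sphere (0 : ℂ) 1) where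
  toFun Ω := (⟨chart Ψ Ω, chart_mem hΨ Ω.2.2⟩,
    ⟨(⟪Ψ, (Ω : H)⟫) / (‖(⟪Ψ, (Ω : H)⟫ : ℂ)‖ : ℂ), by
      rw [mem_sphere_iff_norm, sub_zero, norm_div, Complex.norm_real, norm_norm,
        div_self (norm_ne_zero_iff.mpr Ω.2.2)]⟩)
  invFun P := ⟨((Real.sqrt (1 + ‖(P.1 : H)‖ ^ 2) : ℂ))⁻¹ • ((P.2 : ℂ) • ((P.1 : H) + Ψ)), by
      constructor
      · rw [norm_smul, norm_smul, norm_add_psi hΨ P.1.2]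
        have h2 : ‖(P.2 : ℂ)‖ = 1 := by
          have := P.2.2; rwa [mem_sphere_iff_norm, sub_zero] at this
        rw [h2, one_mul, norm_inv, Complex.norm_real, Real.norm_eq_abs,
          abs_of_pos (sqrt_pos' (P.1 : H)), inv_mul_cancel₀ (sqrt_pos' (P.1 : H)).ne']
      · rw [inner_inv Ψ hΨ P.1 P.2]
        exact mul_ne_zero (inv_ne_zero (sqrtC_ne _)) (lam_ne P.2)⟩
  left_inv := fun Ω => by
    apply Subtype.ext
    have hc : (⟪Ψ, (Ω : H)⟫ : ℂ) ≠ 0 := Ω.2.2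
    have hnorm : ‖(⟪Ψ, (Ω : H)⟫ : ℂ)‖ ≠ 0 := norm_ne_zero_iff.mpr hc
    set c : ℂ := ⟪Ψ, (Ω : H)⟫ with hcdef
    have hadd : chart Ψ (Ω : H) + Ψ = c⁻¹ • (Ω : H) := by
      rw [chart]; abel
    have hn : ‖chart Ψ (Ω : H)‖ ^ 2 + 1 = (‖c‖⁻¹) ^ 2 := by
      have := pythag hΨ (chart_mem hΨ hc)
      rw [hadd, norm_smul, norm_inv, Ω.2.1, mul_one] at this
      rw [← this]
    have hsqrt : Real.sqrt (1 + ‖chart Ψ (Ω : H)‖ ^ 2) = ‖c‖⁻¹ := by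
      rw [add_comm, hn, Real.sqrt_sq (by positivity)]
    show ((Real.sqrt (1 + ‖chart Ψ (Ω : H)‖ ^ 2) : ℂ))⁻¹ •
      ((c / (‖c‖ : ℂ)) • (chart Ψ (Ω : H) + Ψ)) = (Ω : H)
    rw [hsqrt, hadd, smul_smul, smul_smul]
    have habs : ‖c‖ ≠ 0 := hnorm
    rw [show ((((‖c‖ : ℝ)⁻¹ : ℝ) : ℂ))⁻¹ * (c / (‖c‖ : ℂ)) * c⁻¹ = 1 by
      push_cast
      field_simp
      exact div_self (Complex.ofReal_ne_zero.mpr habs)]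
    rw [one_smul]
  right_inv := fun P => by
    obtain ⟨Φ, lam⟩ := P
    have hr : ((Real.sqrt (1 + ‖(Φ : H)‖ ^ 2) : ℝ) : ℂ) ≠ 0 := sqrtC_ne _
    have hlam : (lam : ℂ) ≠ 0 := lam_ne lam
    set r : ℂ := ((Real.sqrt (1 + ‖(Φ : H)‖ ^ 2) : ℝ) : ℂ) with hrdef
    set Ω : H := r⁻¹ • ((lam : ℂ) • ((Φ : H) + Ψ)) with hΩdef
    have hinner : (⟪Ψ, Ω⟫ : ℂ) = r⁻¹ * (lam : ℂ) := inner_inv Ψ hΨ Φ lam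
    have hchart : chart Ψ Ω = (Φ : H) := by
      rw [chart, hinner, hΩdef, smul_smul, smul_smul]
      rw [show (r⁻¹ * (lam : ℂ))⁻¹ * r⁻¹ * (lam : ℂ) = 1 by
        field_simp]
      rw [one_smul]; abel
    refine Prod.ext (Subtype.ext ?_) (Subtype.ext ?_)
    · exact hchart
    · show (⟪Ψ, Ω⟫ : ℂ) / (‖(⟪Ψ, Ω⟫ : ℂ)‖ : ℂ) = (lam : ℂ)
      have hlnorm : ‖(lam : ℂ)‖ = 1 := by
        have := lam.2; rwa [mem_sphere_iff_norm, sub_zero] at this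
      have hrnorm : ‖r⁻¹‖ = (Real.sqrt (1 + ‖(Φ : H)‖ ^ 2))⁻¹ := by
        rw [norm_inv, hrdef, Complex.norm_real, Real.norm_eq_abs,
          abs_of_pos (sqrt_pos' (Φ : H))]
      rw [hinner, norm_mul, hlnorm, mul_one, hrnorm]
      push_cast
      rw [hrdef]
      field_simp
      exact div_self hr

def sigmaHomeo (Ψ : H) (hΨ : ‖Ψ‖ = 1) :
    {Ω : H // ‖Ω‖ = 1 ∧ (inner ℂ Ψ Ω : ℂ) ≠ 0} ≃ₜ
      (↥((Submodule.span ℂ ({Ψ} : Set H))ᗮ) × Metric.sphere (0 : ℂ) 1) where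
  toEquiv := sigmaEquiv Ψ hΨ
  continuous_toFun := by
    have hc : Continuous fun Ω : {Ω : H // ‖Ω‖ = 1 ∧ (inner ℂ Ψ Ω : ℂ) ≠ 0} =>
        (⟪Ψ, (Ω : H)⟫ : ℂ) := Continuous.inner continuous_const continuous_subtype_val
    refine Continuous.prodMk (Continuous.subtype_mk ?_ _) (Continuous.subtype_mk ?_ _)
    · simp only [chart]
      exact ((hc.inv₀ fun Ω => Ω.2.2).smul continuous_subtype_val).sub continuous_const
    · exact hc.div (Complex.continuous_ofReal.comp hc.norm)
        (fun Ω => Complex.ofReal_ne_zero.mpr (norm_ne_zero_iff.mpr Ω.2.2))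
  continuous_invFun := by
    refine Continuous.subtype_mk ?_ _
    refine Continuous.smul ?_ ((continuous_subtype_val.comp continuous_snd).smul
      (((continuous_subtype_val.comp continuous_fst)).add continuous_const))
    refine Continuous.inv₀ ?_ (fun P => sqrtC_ne _)
    exact Complex.continuous_ofReal.comp (Real.continuous_sqrt.comp
      (continuous_const.add ((continuous_subtype_val.comp continuous_fst).norm.pow 2)))

def tauAux (Ψ : H) (hΨ : ‖Ψ‖ = 1) (v : {v : H // v ≠ 0}) :
    ↥((span ℂ ({Ψ} : Set H))ᗮ) :=
  if h : (⟪Ψ, (v : H)⟫ : ℂ) ≠ 0 then ⟨chart Ψ v, chart_mem hΨ h⟩ else 0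

lemma tauAux_respects (Ψ : H) (hΨ : ‖Ψ‖ = 1) :
    ∀ a b : {v : H // v ≠ 0}, (projSetoid H).r a b → tauAux Ψ hΨ a = tauAux Ψ hΨ b := by
  rintro a b ⟨c, hc⟩
  have hc0 : c ≠ 0 := by
    intro h; apply b.2; rw [h, zero_smul] at hc; exact hc
  have hib : (⟪Ψ, (b : H)⟫ : ℂ) = c * ⟪Ψ, (a : H)⟫ := by rw [hc, inner_smul_right]
  by_cases ha : (⟪Ψ, (a : H)⟫ : ℂ) ≠ 0
  · have hb : (⟪Ψ, (b : H)⟫ : ℂ) ≠ 0 := by rw [hib]; exact mul_ne_zero hc0 ha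
    rw [tauAux, tauAux, dif_pos ha, dif_pos hb]
    apply Subtype.ext
    show chart Ψ (a : H) = chart Ψ (b : H)
    rw [chart, chart, hib, hc, smul_smul]
    congr 1
    rw [show (c * ⟪Ψ, (a : H)⟫)⁻¹ * c = (⟪Ψ, (a : H)⟫ : ℂ)⁻¹ by field_simp]
  · have hb : ¬ (⟪Ψ, (b : H)⟫ : ℂ) ≠ 0 := by
      push_neg at ha ⊢; rw [hib, ha, mul_zero]
    rw [tauAux, tauAux, dif_neg ha, dif_neg hb]

def tauBar (Ψ : H) (hΨ : ‖Ψ‖ = 1) : ProjH H → ↥((span ℂ ({Ψ} : Set H))ᗮ) :=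
  Quotient.lift (tauAux Ψ hΨ) (tauAux_respects Ψ hΨ)

lemma tauBar_mk (Ψ : H) (hΨ : ‖Ψ‖ = 1) (v : {v : H // v ≠ 0}) :
    tauBar Ψ hΨ (ProjH.mk v) = tauAux Ψ hΨ v := rfl

lemma add_ne {Ψ : H} (hΨ : ‖Ψ‖ = 1) (Φ : ↥((span ℂ ({Ψ} : Set H))ᗮ)) :
    (Φ : H) + Ψ ≠ 0 := by
  intro h
  have h1 : (⟪Ψ, (Φ : H) + Ψ⟫ : ℂ) = 1 := inner_add_psi hΨ Φ.2
  rw [h, inner_zero_right] at h1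
  exact one_ne_zero h1.symm

lemma mk_eq_mk_of (x v : {v : H // v ≠ 0}) (c : ℂ) (h : (v : H) = c • (x : H)) :
    ProjH.mk x = ProjH.mk v := Quotient.sound ⟨c, h⟩

lemma exists_rep_iff (Ψ : H) (v : {v : H // v ≠ 0}) :
    (∃ w : {v : H // v ≠ 0}, ProjH.mk w = ProjH.mk v ∧ (⟪Ψ, (w : H)⟫ : ℂ) ≠ 0) ↔
      (⟪Ψ, (v : H)⟫ : ℂ) ≠ 0 := by
  constructor
  · rintro ⟨w, hw, hne⟩
    obtain ⟨c, hc⟩ := Quotient.exact hw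
    have hc0 : c ≠ 0 := by
      intro h; apply v.2; rw [h, zero_smul] at hc; exact hc
    rw [show (v : H) = c • (w : H) from hc, inner_smul_right]
    exact mul_ne_zero hc0 hne
  · intro h; exact ⟨v, rfl, h⟩

def tauEquiv (Ψ : H) (hΨ : ‖Ψ‖ = 1) :
    {a : ProjH H //
        ∃ v : {v : H // v ≠ 0}, ProjH.mk v = a ∧ (inner ℂ Ψ (v : H) : ℂ) ≠ 0} ≃
      ↥((Submodule.span ℂ ({Ψ} : Set H))ᗮ) where
  toFun a := tauBar Ψ hΨ a.1
  invFun Φ := ⟨ProjH.mk ⟨(Φ : H) + Ψ, add_ne hΨ Φ⟩,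
    ⟨⟨(Φ : H) + Ψ, add_ne hΨ Φ⟩, rfl, by
      rw [inner_add_psi hΨ Φ.2]; exact one_ne_zero⟩⟩
  left_inv := by
    rintro ⟨a1, hprop⟩
    obtain ⟨v, hv, hne⟩ := hprop
    subst hv
    apply Subtype.ext
    show ProjH.mk _ = ProjH.mk v
    apply mk_eq_mk_of _ _ (⟪Ψ, (v : H)⟫ : ℂ)
    show (v : H) = (⟪Ψ, (v : H)⟫ : ℂ) • ((tauBar Ψ hΨ (ProjH.mk v) : H) + Ψ)
    rw [tauBar_mk, tauAux, dif_pos hne]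
    show (v : H) = (⟪Ψ, (v : H)⟫ : ℂ) • (chart Ψ (v : H) + Ψ)
    rw [chart, sub_add_cancel, smul_smul, mul_inv_cancel₀ hne, one_smul]
  right_inv := by
    intro Φ
    apply Subtype.ext
    show (tauBar Ψ hΨ (ProjH.mk ⟨(Φ : H) + Ψ, add_ne hΨ Φ⟩) : H) = (Φ : H)
    rw [tauBar_mk, tauAux, dif_pos (by rw [inner_add_psi hΨ Φ.2]; exact one_ne_zero)]
    show chart Ψ ((Φ : H) + Ψ) = (Φ : H)
    rw [chart, inner_add_psi hΨ Φ.2, inv_one, one_smul, add_sub_cancel_right]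

lemma isOpenU (Ψ : H) : IsOpen {v : {v : H // v ≠ 0} | (⟪Ψ, (v : H)⟫ : ℂ) ≠ 0} := by
  have hc : Continuous fun v : {v : H // v ≠ 0} => (⟪Ψ, (v : H)⟫ : ℂ) :=
    Continuous.inner continuous_const continuous_subtype_val
  exact isOpen_compl_singleton.preimage hc

lemma chart_continuousOn (Ψ : H) :
    ContinuousOn (fun v : {v : H // v ≠ 0} => chart Ψ (v : H))
      {v : {v : H // v ≠ 0} | (⟪Ψ, (v : H)⟫ : ℂ) ≠ 0} := by
  simp only [chart]
  exact (((Continuous.inner continuous_const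
    continuous_subtype_val).continuousOn.inv₀ (fun x hx => hx)).smul
    continuous_subtype_val.continuousOn).sub continuousOn_const

def tauHomeo (Ψ : H) (hΨ : ‖Ψ‖ = 1) :
    {a : ProjH H //
        ∃ v : {v : H // v ≠ 0}, ProjH.mk v = a ∧ (inner ℂ Ψ (v : H) : ℂ) ≠ 0} ≃ₜ
      ↥((Submodule.span ℂ ({Ψ} : Set H))ᗮ) where
  toEquiv := tauEquiv Ψ hΨ
  continuous_invFun := by
    refine Continuous.subtype_mk ?_ _
    exact continuous_coinduced_rng.comp
      ((continuous_subtype_val.add continuous_const).subtype_mk _)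
  continuous_toFun := by
    show Continuous fun a : {a : ProjH H //
        ∃ v : {v : H // v ≠ 0}, ProjH.mk v = a ∧ (inner ℂ Ψ (v : H) : ℂ) ≠ 0} =>
      tauBar Ψ hΨ a.1
    rw [continuous_def]
    intro V hV
    obtain ⟨W, hW, rfl⟩ := isOpen_induced_iff.mp hV
    have hO : IsOpen {a : ProjH H |
        (∃ v : {v : H // v ≠ 0}, ProjH.mk v = a ∧ (⟪Ψ, (v : H)⟫ : ℂ) ≠ 0) ∧
          (tauBar Ψ hΨ a : H) ∈ W} := by
      refine isOpen_coinduced.mpr ?_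
      have heq : ProjH.mk ⁻¹' {a : ProjH H |
          (∃ v : {v : H // v ≠ 0}, ProjH.mk v = a ∧ (⟪Ψ, (v : H)⟫ : ℂ) ≠ 0) ∧
            (tauBar Ψ hΨ a : H) ∈ W}
          = {v : {v : H // v ≠ 0} | (⟪Ψ, (v : H)⟫ : ℂ) ≠ 0} ∩
            (fun v : {v : H // v ≠ 0} => chart Ψ (v : H)) ⁻¹' W := by
        ext v
        simp only [Set.mem_preimage, Set.mem_setOf_eq, Set.mem_inter_iff]
        constructor
        · rintro ⟨hb, hw⟩
          have hne := (exists_rep_iff Ψ v).mp hb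
          refine ⟨hne, ?_⟩
          rwa [tauBar_mk, tauAux, dif_pos hne] at hw
        · rintro ⟨hne, hw⟩
          exact ⟨(exists_rep_iff Ψ v).mpr hne, by
            rw [tauBar_mk, tauAux, dif_pos hne]; exact hw⟩
      rw [heq]
      exact ContinuousOn.isOpen_inter_preimage (chart_continuousOn Ψ) (isOpenU Ψ) hW
    have hset : (fun a : {a : ProjH H //
        ∃ v : {v : H // v ≠ 0}, ProjH.mk v = a ∧ (inner ℂ Ψ (v : H) : ℂ) ≠ 0} =>
          tauBar Ψ hΨ a.1) ⁻¹' (Subtype.val ⁻¹' W)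
        = Subtype.val ⁻¹' {a : ProjH H |
            (∃ v : {v : H // v ≠ 0}, ProjH.mk v = a ∧ (⟪Ψ, (v : H)⟫ : ℂ) ≠ 0) ∧
              (tauBar Ψ hΨ a : H) ∈ W} := by
      ext x
      simp only [Set.mem_preimage, Set.mem_setOf_eq]
      exact ⟨fun h => ⟨x.2, h⟩, fun h => h.2⟩
    rw [hset]
    exact hO.preimage continuous_subtype_val

end PCharts


/-- For a unit vector `Ψ` the maps `σ_Ψ(Ω) = (Ω/⟨Ψ,Ω⟩ − Ψ, ⟨Ψ,Ω⟩/|⟨Ψ,Ω⟩|)`, defined on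
`𝕊𝓗 ∖ (𝕊𝓗 ∩ ℂΨ^⊥)`, and `τ_Ψ(ℂΩ) = Ω/⟨Ψ,Ω⟩ − Ψ`, defined on the open unit gap ball
`𝔹₁(ℂΨ) = {ℂΩ : ⟨Ψ,Ω⟩ ≠ 0}`, are well-defined homeomorphisms onto `ℂΨ^⊥ × U(1)` and `ℂΨ^⊥`
respectively, with inverses `σ_Ψ⁻¹(Φ,λ) = λ(Φ+Ψ)/√(1+‖Φ‖²)` and `τ_Ψ⁻¹(Φ) = ℂ(Φ+Ψ)`. -/
theorem projective_space_charts (H : Type*) [NormedAddCommGroup H] [InnerProductSpace ℂ H]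
    [CompleteSpace H] [Nontrivial H] (Ψ : H) (hΨ : ‖Ψ‖ = 1) :
    (∃ σ : {Ω : H // ‖Ω‖ = 1 ∧ (inner ℂ Ψ Ω : ℂ) ≠ 0} ≃ₜ
        (↥((Submodule.span ℂ ({Ψ} : Set H))ᗮ) × Metric.sphere (0 : ℂ) 1),
      (∀ Ω : {Ω : H // ‖Ω‖ = 1 ∧ (inner ℂ Ψ Ω : ℂ) ≠ 0},
        (((σ Ω).1 : H) = (inner ℂ Ψ (Ω : H) : ℂ)⁻¹ • (Ω : H) - Ψ ∧
         ((σ Ω).2 : ℂ)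
           = (inner ℂ Ψ (Ω : H) : ℂ) / (‖(inner ℂ Ψ (Ω : H) : ℂ)‖ : ℂ))) ∧
      (∀ (Φ : ↥((Submodule.span ℂ ({Ψ} : Set H))ᗮ)) (lam : Metric.sphere (0 : ℂ) 1),
        ((σ.symm (Φ, lam) : H))
          = ((Real.sqrt (1 + ‖(Φ : H)‖ ^ 2) : ℂ))⁻¹ • ((lam : ℂ) • ((Φ : H) + Ψ)))) ∧
    (∃ τ : {a : ProjH H //
          ∃ v : {v : H // v ≠ 0}, ProjH.mk v = a ∧ (inner ℂ Ψ (v : H) : ℂ) ≠ 0} ≃ₜ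
        ↥((Submodule.span ℂ ({Ψ} : Set H))ᗮ),
      (∀ (v : {v : H // v ≠ 0}) (hv : (inner ℂ Ψ (v : H) : ℂ) ≠ 0),
        ((τ ⟨ProjH.mk v, v, rfl, hv⟩ : H)) = (inner ℂ Ψ (v : H) : ℂ)⁻¹ • (v : H) - Ψ) ∧
      (∀ (Φ : ↥((Submodule.span ℂ ({Ψ} : Set H))ᗮ)) (h : (Φ : H) + Ψ ≠ 0),
        ((τ.symm Φ : ProjH H)) = ProjH.mk ⟨(Φ : H) + Ψ, h⟩)) := by
  constructor
  · exact ⟨PCharts.sigmaHomeo Ψ hΨ, fun Ω => ⟨rfl, rfl⟩, fun Φ lam => rfl⟩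
  · refine ⟨PCharts.tauHomeo Ψ hΨ, fun v hv => ?_, fun Φ h => rfl⟩
    show (PCharts.tauBar Ψ hΨ (ProjH.mk v) : H) = _
    rw [PCharts.tauBar_mk, PCharts.tauAux, dif_pos hv]
    rfl

end
end

section
/- Let 𝓗 be a nonzero complex Hilbert space, Ψ ∈ 𝕊𝓗, and 𝔹₁(ℂΨ) = {ℂΩ ∈ ℙ𝓗 : ⟨Ψ, Ω⟩ ≠ 0} the open unit gap ball around ℂΨ. Then the map ρ_Ψ : p|_{𝕊𝓗}⁻¹(𝔹₁(ℂΨ)) → 𝔹₁(ℂΨ) × U(1), ρ_Ψ(Ω) = (ℂΩ, ⟨Ψ,Ω⟩/|⟨Ψ,Ω⟩|), is a homeomorphism whose composition with the projection onto the first factor equals p|_{𝕊𝓗}. Since such balls cover ℙ𝓗, the maps ρ_Ψ form a trivializing atlas exhibiting p|_{𝕊𝓗} : 𝕊𝓗 → ℙ𝓗 as a fiber bundle with typical fiber U(1). -/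
noncomputable section

section MyAux

variable {H : Type*} [NormedAddCommGroup H] [InnerProductSpace ℂ H]

lemma my_phase_aux {a c b nv nt nc : ℂ} (hac : a * c = nc ^ 2) (hnt : nt ≠ 0) (hnv : nv ≠ 0)
    (hnc : nc ≠ 0) : a * b / (nc * nt * (nc * nv)) * c = b / (nt * nv) := by
  rw [div_mul_eq_mul_div, div_eq_div_iff (mul_ne_zero (mul_ne_zero hnc hnt) (mul_ne_zero hnc hnv))
    (mul_ne_zero hnt hnv)]
  linear_combination (b * nt * nv) * hac

/-- Canonical unit representative with positive inner product against `Ψ`. -/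
def vmap (Ψ v : H) : H :=
  ((starRingEnd ℂ) (inner ℂ Ψ v) / ((‖(inner ℂ Ψ v : ℂ)‖ : ℂ) * (‖v‖ : ℂ))) • v

lemma vmap_smul (Ψ v : H) {c : ℂ} (hc : c ≠ 0) : vmap Ψ (c • v) = vmap Ψ v := by
  by_cases ht : (inner ℂ Ψ v : ℂ) = 0
  · simp [vmap, inner_smul_right, ht]
  · have hv : v ≠ 0 := fun h => ht (by simp [h])
    have hnv : (‖v‖ : ℂ) ≠ 0 := by exact_mod_cast norm_ne_zero_iff.mpr hv
    have hnt : (‖(inner ℂ Ψ v : ℂ)‖ : ℂ) ≠ 0 := by exact_mod_cast norm_ne_zero_iff.mpr ht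
    have hnc : (‖c‖ : ℂ) ≠ 0 := by exact_mod_cast norm_ne_zero_iff.mpr hc
    rw [vmap, vmap, inner_smul_right, smul_smul]
    congr 1
    rw [map_mul, norm_mul, norm_smul]
    push_cast
    exact my_phase_aux (RCLike.conj_mul c) hnt hnv hnc

lemma norm_vmap (Ψ : H) {v : H} (hv : v ≠ 0) (ht : (inner ℂ Ψ v : ℂ) ≠ 0) :
    ‖vmap Ψ v‖ = 1 := by
  have hnv : ‖v‖ ≠ 0 := norm_ne_zero_iff.mpr hv
  have hnt : ‖(inner ℂ Ψ v : ℂ)‖ ≠ 0 := norm_ne_zero_iff.mpr ht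
  rw [vmap, norm_smul, norm_div, norm_mul, RCLike.norm_conj]
  simp only [Complex.norm_real, Real.norm_eq_abs, abs_norm]
  field_simp

lemma inner_vmap (Ψ : H) (v : H) :
    (inner ℂ Ψ (vmap Ψ v) : ℂ) = (‖(inner ℂ Ψ v : ℂ)‖ : ℂ) / (‖v‖ : ℂ) := by
  by_cases ht : (inner ℂ Ψ v : ℂ) = 0
  · simp [vmap, ht]
  have hv : v ≠ 0 := fun h => ht (by simp [h])
  have hnv : (‖v‖ : ℂ) ≠ 0 := by exact_mod_cast norm_ne_zero_iff.mpr hv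
  have hnt : (‖(inner ℂ Ψ v : ℂ)‖ : ℂ) ≠ 0 := by exact_mod_cast norm_ne_zero_iff.mpr ht
  rw [vmap, inner_smul_right, div_mul_eq_mul_div, mul_comm, Complex.mul_conj']
  rw [sq, mul_div_assoc]
  rw [mul_div_assoc', mul_div_mul_left _ _ hnt]

/-- The canonical representative of a ray. -/
def rayRep (Ψ : H) : ProjH H → H :=
  Quotient.lift (fun v : {v : H // v ≠ 0} => vmap Ψ (v : H)) (by
    rintro a b ⟨c, hc⟩
    have hc0 : c ≠ 0 := by
      intro h
      exact b.2 (by rw [hc, h, zero_smul])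
    rw [hc, vmap_smul Ψ _ hc0])

lemma rayRep_mk (Ψ : H) (v : {v : H // v ≠ 0}) :
    rayRep Ψ (ProjH.mk v) = vmap Ψ (v : H) := rfl

lemma rayRep_spec (Ψ : H) {a : ProjH H}
    (ha : ∃ v : {v : H // v ≠ 0}, ProjH.mk v = a ∧ (inner ℂ Ψ (v : H) : ℂ) ≠ 0) :
    ‖rayRep Ψ a‖ = 1 ∧ ∃ r : ℝ, 0 < r ∧ (inner ℂ Ψ (rayRep Ψ a) : ℂ) = (r : ℂ) := by
  obtain ⟨v, rfl, hvt⟩ := ha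
  rw [rayRep_mk]
  refine ⟨norm_vmap Ψ v.2 hvt, ‖(inner ℂ Ψ (v : H) : ℂ)‖ / ‖(v : H)‖, ?_, ?_⟩
  · exact div_pos (norm_pos_iff.mpr hvt) (norm_pos_iff.mpr v.2)
  · rw [inner_vmap]
    push_cast
    ring

lemma smul_vmap_eq (Ψ : H) {Ω : H} (hΩ : ‖Ω‖ = 1) (ht : (inner ℂ Ψ Ω : ℂ) ≠ 0) :
    ((inner ℂ Ψ Ω : ℂ) / (‖(inner ℂ Ψ Ω : ℂ)‖ : ℂ)) • vmap Ψ Ω = Ω := by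
  have hnt : (‖(inner ℂ Ψ Ω : ℂ)‖ : ℂ) ≠ 0 := by exact_mod_cast norm_ne_zero_iff.mpr ht
  rw [vmap, smul_smul, hΩ, Complex.ofReal_one, mul_one, div_mul_div_comm,
    Complex.mul_conj', sq, div_self (mul_ne_zero hnt hnt), one_smul]

lemma phase_norm_one {t : ℂ} (ht : t ≠ 0) : ‖t / (‖t‖ : ℂ)‖ = 1 := by
  rw [norm_div, Complex.norm_real, Real.norm_eq_abs, abs_norm,
    div_self (norm_ne_zero_iff.mpr ht)]

end MyAux

/-- For each unit vector `Ψ`, the map `ρ_Ψ(Ω) = (ℂΩ, ⟨Ψ,Ω⟩/|⟨Ψ,Ω⟩|)` is a homeomorphism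
from `p|_{𝕊𝓗}⁻¹(𝔹₁(ℂΨ)) = 𝕊𝓗 ∖ (𝕊𝓗 ∩ ℂΨ^⊥)` onto `𝔹₁(ℂΨ) × U(1)` commuting with the
projections onto `𝔹₁(ℂΨ)`; moreover the gap balls `𝔹₁(ℂΨ)` cover `ℙ𝓗`, so these maps form a
trivializing atlas exhibiting `p|_{𝕊𝓗} : 𝕊𝓗 → ℙ𝓗` as a fiber bundle with typical fiber
`U(1)`. -/
theorem sphere_circle_bundle_trivialization (H : Type*) [NormedAddCommGroup H]
    [InnerProductSpace ℂ H] [CompleteSpace H] [Nontrivial H]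
    (Ψ : H) (hΨ : ‖Ψ‖ = 1) :
    (∃ ρ : {Ω : H // ‖Ω‖ = 1 ∧ (inner ℂ Ψ Ω : ℂ) ≠ 0} ≃ₜ
        ({a : ProjH H //
            ∃ v : {v : H // v ≠ 0}, ProjH.mk v = a ∧ (inner ℂ Ψ (v : H) : ℂ) ≠ 0}
          × Metric.sphere (0 : ℂ) 1),
      ∀ Ω : {Ω : H // ‖Ω‖ = 1 ∧ (inner ℂ Ψ Ω : ℂ) ≠ 0},
        -- the first component of ρ Ω is the ray ℂΩ (so ρ commutes with the projections)
        (((ρ Ω).1 : ProjH H) = ProjH.mk ⟨(Ω : H), by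
            intro h0
            have h1 := Ω.2.1
            rw [h0] at h1
            simp at h1⟩) ∧
        -- the second component is the phase ⟨Ψ,Ω⟩/|⟨Ψ,Ω⟩|
        ((ρ Ω).2 : ℂ) = (inner ℂ Ψ (Ω : H) : ℂ) / (‖(inner ℂ Ψ (Ω : H) : ℂ)‖ : ℂ)) ∧
    -- the open unit gap balls 𝔹₁(ℂΨ') cover ℙ𝓗
    (∀ a : ProjH H, ∃ Ψ' : H, ‖Ψ'‖ = 1 ∧
      ∃ v : {v : H // v ≠ 0}, ProjH.mk v = a ∧ (inner ℂ Ψ' (v : H) : ℂ) ≠ 0) := by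
  constructor
  · -- the trivialization
    have hne : ∀ Ω : {Ω : H // ‖Ω‖ = 1 ∧ (inner ℂ Ψ Ω : ℂ) ≠ 0}, (Ω : H) ≠ 0 := by
      intro Ω h0
      have h1 := Ω.2.1
      rw [h0] at h1
      simp at h1
    set B := {a : ProjH H //
        ∃ v : {v : H // v ≠ 0}, ProjH.mk v = a ∧ (inner ℂ Ψ (v : H) : ℂ) ≠ 0} with hB
    set S := {Ω : H // ‖Ω‖ = 1 ∧ (inner ℂ Ψ Ω : ℂ) ≠ 0} with hS
    -- forward map
    let f : S → B × Metric.sphere (0 : ℂ) 1 := fun Ω =>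
      (⟨ProjH.mk ⟨(Ω : H), hne Ω⟩, ⟨⟨(Ω : H), hne Ω⟩, rfl, Ω.2.2⟩⟩,
       ⟨(inner ℂ Ψ (Ω : H) : ℂ) / (‖(inner ℂ Ψ (Ω : H) : ℂ)‖ : ℂ), by
          rw [mem_sphere_zero_iff_norm]
          exact phase_norm_one Ω.2.2⟩)
    -- inverse map
    have ginner : ∀ x : B × Metric.sphere (0 : ℂ) 1,
        ‖(x.2 : ℂ) • rayRep Ψ (x.1 : ProjH H)‖ = 1 ∧
        (inner ℂ Ψ ((x.2 : ℂ) • rayRep Ψ (x.1 : ProjH H)) : ℂ) ≠ 0 := by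
      intro x
      obtain ⟨h1, r, hr, h2⟩ := rayRep_spec Ψ x.1.2
      have hz : ‖(x.2 : ℂ)‖ = 1 := by
        have := x.2.2
        rwa [mem_sphere_zero_iff_norm] at this
      constructor
      · rw [norm_smul, hz, one_mul, h1]
      · rw [inner_smul_right, h2]
        intro h
        rcases mul_eq_zero.mp h with h | h
        · rw [h, norm_zero] at hz; norm_num at hz
        · rw [Complex.ofReal_eq_zero] at h
          exact hr.ne' h
    let g : B × Metric.sphere (0 : ℂ) 1 → S := fun x =>
      ⟨(x.2 : ℂ) • rayRep Ψ (x.1 : ProjH H), (ginner x).1, (ginner x).2⟩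
    -- the maps are inverse to each other
    have hgf : Function.LeftInverse g f := by
      intro Ω
      apply Subtype.ext
      show ((inner ℂ Ψ (Ω : H) : ℂ) / (‖(inner ℂ Ψ (Ω : H) : ℂ)‖ : ℂ)) •
        rayRep Ψ (ProjH.mk ⟨(Ω : H), hne Ω⟩) = (Ω : H)
      rw [rayRep_mk]
      exact smul_vmap_eq Ψ Ω.2.1 Ω.2.2
    have hfg : Function.RightInverse g f := by
      intro x
      obtain ⟨h1, r, hr, h2⟩ := rayRep_spec Ψ x.1.2
      have hz : ‖(x.2 : ℂ)‖ = 1 := by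
        have := x.2.2
        rwa [mem_sphere_zero_iff_norm] at this
      have hz0 : (x.2 : ℂ) ≠ 0 := by
        intro h; rw [h, norm_zero] at hz; norm_num at hz
      apply Prod.ext
      · -- first components agree
        apply Subtype.ext
        show ProjH.mk ⟨(x.2 : ℂ) • rayRep Ψ (x.1 : ProjH H), _⟩ = (x.1 : ProjH H)
        obtain ⟨v, hv, hvt⟩ := x.1.2
        conv_rhs => rw [← hv]
        apply Eq.symm
        apply Quotient.sound
        refine ⟨(x.2 : ℂ) * ((starRingEnd ℂ) (inner ℂ Ψ (v : H)) /
          ((‖(inner ℂ Ψ (v : H) : ℂ)‖ : ℂ) * (‖(v : H)‖ : ℂ))), ?_⟩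
        show (x.2 : ℂ) • rayRep Ψ (x.1 : ProjH H) = _ • (v : H)
        rw [← hv, rayRep_mk, vmap, smul_smul]
      · -- second components agree
        apply Subtype.ext
        show (inner ℂ Ψ ((x.2 : ℂ) • rayRep Ψ (x.1 : ProjH H)) : ℂ) /
          (‖(inner ℂ Ψ ((x.2 : ℂ) • rayRep Ψ (x.1 : ProjH H)) : ℂ)‖ : ℂ) = (x.2 : ℂ)
        rw [inner_smul_right, h2, norm_mul, hz, one_mul, Complex.norm_real,
          Real.norm_eq_abs, abs_of_pos hr]
        rw [mul_div_assoc, div_self (by exact_mod_cast hr.ne'), mul_one]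
    -- continuity of f
    have hf : Continuous f := by
      apply Continuous.prodMk
      · apply Continuous.subtype_mk
        exact continuous_coinduced_rng.comp (continuous_subtype_val.subtype_mk _)
      · apply Continuous.subtype_mk
        apply Continuous.div
        · exact Continuous.inner continuous_const continuous_subtype_val
        · exact Complex.continuous_ofReal.comp
            ((Continuous.inner continuous_const continuous_subtype_val).norm)
        · intro Ω
          exact_mod_cast fun h => Ω.2.2 (norm_eq_zero.mp (by exact_mod_cast h))
    -- continuity of rayRep restricted to B
    have hw : Continuous (fun b : B => rayRep Ψ (b : ProjH H)) := by
      rw [continuous_def]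
      intro V hV
      rw [isOpen_induced_iff]
      set s : Set {v : H // v ≠ 0} :=
        {v | (inner ℂ Ψ (v : H) : ℂ) ≠ 0 ∧ vmap Ψ (v : H) ∈ V} with hs
      refine ⟨ProjH.mk '' s, ?_, ?_⟩
      · rw [isOpen_coinduced (f := ProjH.mk)]
        have hsat : ProjH.mk ⁻¹' (ProjH.mk '' s) = s := by
          apply Set.Subset.antisymm
          · rintro w ⟨v, hv, hmk⟩
            obtain ⟨c, hc⟩ := Quotient.exact hmk.symm
            have hc0 : c ≠ 0 := by
              intro h
              exact v.2 (by rw [hc, h, zero_smul])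
            have hvm : vmap Ψ (w : H) = vmap Ψ (v : H) := by
              rw [hc]
              exact (vmap_smul Ψ _ hc0).symm
            have hin : (inner ℂ Ψ (v : H) : ℂ) = c * (inner ℂ Ψ (w : H) : ℂ) := by
              rw [hc, inner_smul_right]
            constructor
            · intro h
              apply hv.1
              rw [hin, h, mul_zero]
            · rw [hvm]
              exact hv.2
          · intro v hv
            exact ⟨v, hv, rfl⟩
        rw [hsat]
        -- s is open
        have hU : IsOpen {v : {v : H // v ≠ 0} | (inner ℂ Ψ (v : H) : ℂ) ≠ 0} := by
          have : Continuous (fun v : {v : H // v ≠ 0} => (inner ℂ Ψ (v : H) : ℂ)) :=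
            Continuous.inner continuous_const continuous_subtype_val
          exact isOpen_compl_singleton.preimage this
        have hco : ContinuousOn (fun v : {v : H // v ≠ 0} => vmap Ψ (v : H))
            {v : {v : H // v ≠ 0} | (inner ℂ Ψ (v : H) : ℂ) ≠ 0} := by
          apply ContinuousOn.smul
          · apply ContinuousOn.div
            · exact (Complex.continuous_conj.comp
                (Continuous.inner continuous_const continuous_subtype_val)).continuousOn
            · apply ContinuousOn.mul
              · exact (Complex.continuous_ofReal.comp
                  ((Continuous.inner continuous_const continuous_subtype_val).norm)).continuousOn
              · exact (Complex.continuous_ofReal.comp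
                  continuous_subtype_val.norm).continuousOn
            · intro v hvt
              apply mul_ne_zero
              · exact_mod_cast fun h => hvt (norm_eq_zero.mp (by exact_mod_cast h))
              · exact_mod_cast norm_ne_zero_iff.mpr v.2
          · exact continuous_subtype_val.continuousOn
        exact hco.isOpen_inter_preimage hU hV
      · ext b
        simp only [Set.mem_preimage]
        constructor
        · rintro ⟨v, hv, hmk⟩
          show rayRep Ψ (b : ProjH H) ∈ V
          rw [← hmk, rayRep_mk]
          exact hv.2
        · intro hb
          obtain ⟨v, hv, hvt⟩ := b.2
          refine ⟨v, ⟨hvt, ?_⟩, hv⟩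
          rw [← rayRep_mk Ψ v, hv]
          exact hb
    -- continuity of g
    have hg : Continuous g := by
      apply Continuous.subtype_mk
      exact Continuous.smul (continuous_subtype_val.comp continuous_snd)
        (hw.comp continuous_fst)
    refine ⟨⟨⟨f, g, hgf, hfg⟩, hf, hg⟩, ?_⟩
    intro Ω
    exact ⟨rfl, rfl⟩
  · -- the gap balls cover ℙ𝓗
    intro a
    obtain ⟨v, rfl⟩ := Quotient.exists_rep a
    have hnv : (‖(v : H)‖ : ℂ) ≠ 0 := by exact_mod_cast norm_ne_zero_iff.mpr v.2
    refine ⟨((‖(v : H)‖ : ℂ))⁻¹ • (v : H), ?_, v, rfl, ?_⟩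
    · rw [norm_smul, norm_inv, Complex.norm_real, Real.norm_eq_abs, abs_norm]
      rw [inv_mul_cancel₀ (norm_ne_zero_iff.mpr v.2)]
    · rw [inner_smul_left]
      apply mul_ne_zero
      · simpa using hnv
      · rw [inner_self_ne_zero]
        exact v.2


end
end

section
/- Let 𝓗 be a complex Hilbert space, let Ψ, Ω ∈ 𝕊𝓗, and let 𝓗_{Ψ,Ω} = span{Ψ, Ω}. The linear map U_{Ψ,Ω} : 𝓗_{Ψ,Ω} → 𝓗_{Ψ,Ω} defined by U_{Ψ,Ω}Φ = ⟨Ω,Ψ⟩Φ − ⟨Ω,Φ⟩Ψ + ⟨Ψ,Φ⟩Ω is unitary (it preserves inner products and is surjective onto 𝓗_{Ψ,Ω}), and it satisfies U_{Ψ,Ω}Ψ = Ω and U_{Ψ,Ω}Ω = 2 Re⟨Ψ,Ω⟩ · Ω − Ψ. -/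
/-- Given unit vectors `Ψ, Ω` in a complex Hilbert space, the map
`U Φ = ⟨Ω,Ψ⟩ Φ − ⟨Ω,Φ⟩ Ψ + ⟨Ψ,Φ⟩ Ω` is linear, maps `span{Ψ,Ω}` to itself, is unitary on
`span{Ψ,Ω}` (preserves inner products and is surjective onto the span), and satisfies
`U Ψ = Ω` and `U Ω = 2 Re⟨Ψ,Ω⟩ · Ω − Ψ`. -/
theorem rotation_unitary_on_span {H : Type*} [NormedAddCommGroup H] [InnerProductSpace ℂ H]
    (Ψ Ω : H) (hΨ : ‖Ψ‖ = 1) (hΩ : ‖Ω‖ = 1)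
    (U : H → H)
    (hU : ∀ Φ : H, U Φ = (inner ℂ Ω Ψ : ℂ) • Φ - (inner ℂ Ω Φ : ℂ) • Ψ + (inner ℂ Ψ Φ : ℂ) • Ω) :
    -- U is complex linear
    (∀ (c : ℂ) (Φ₁ Φ₂ : H), U (c • Φ₁ + Φ₂) = c • U Φ₁ + U Φ₂) ∧
    -- U maps the span of {Ψ, Ω} into itself
    (∀ Φ ∈ Submodule.span ℂ ({Ψ, Ω} : Set H), U Φ ∈ Submodule.span ℂ ({Ψ, Ω} : Set H)) ∧
    -- U preserves inner products of elements of the span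
    (∀ Φ₁ ∈ Submodule.span ℂ ({Ψ, Ω} : Set H), ∀ Φ₂ ∈ Submodule.span ℂ ({Ψ, Ω} : Set H),
      (inner ℂ (U Φ₁) (U Φ₂) : ℂ) = inner ℂ Φ₁ Φ₂) ∧
    -- U is surjective from the span onto the span
    (∀ Ξ ∈ Submodule.span ℂ ({Ψ, Ω} : Set H),
      ∃ Φ ∈ Submodule.span ℂ ({Ψ, Ω} : Set H), U Φ = Ξ) ∧
    U Ψ = Ω ∧
    U Ω = ((2 * (inner ℂ Ψ Ω : ℂ).re : ℝ) : ℂ) • Ω - Ψ := by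
  have hΨΨ : (inner ℂ Ψ Ψ : ℂ) = 1 := by
    rw [inner_self_eq_norm_sq_to_K, hΨ]; norm_num
  have hΩΩ : (inner ℂ Ω Ω : ℂ) = 1 := by
    rw [inner_self_eq_norm_sq_to_K, hΩ]; norm_num
  have hconj : (inner ℂ Ω Ψ : ℂ) = starRingEnd ℂ (inner ℂ Ψ Ω) := (inner_conj_symm Ω Ψ).symm
  have hlin : ∀ (c : ℂ) (Φ₁ Φ₂ : H), U (c • Φ₁ + Φ₂) = c • U Φ₁ + U Φ₂ := by
    intro c Φ₁ Φ₂
    simp only [hU, inner_add_right, inner_smul_right]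
    module
  have hU0 : U 0 = 0 := by simp [hU]
  have hadd : ∀ Φ₁ Φ₂, U (Φ₁ + Φ₂) = U Φ₁ + U Φ₂ := by
    intro Φ₁ Φ₂; simpa using hlin 1 Φ₁ Φ₂
  have hsmul : ∀ (c : ℂ) Φ, U (c • Φ) = c • U Φ := by
    intro c Φ; simpa [hU0] using hlin c Φ 0
  have hUΨ : U Ψ = Ω := by rw [hU, hΨΨ]; simp
  have hc : (inner ℂ Ω Ψ : ℂ) + inner ℂ Ψ Ω = ((2 * (inner ℂ Ψ Ω : ℂ).re : ℝ) : ℂ) := by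
    rw [hconj, add_comm, Complex.add_conj]
  have hUΩ : U Ω = ((2 * (inner ℂ Ψ Ω : ℂ).re : ℝ) : ℂ) • Ω - Ψ := by
    rw [hU, hΩΩ, ← hc]; module
  have hΨm : Ψ ∈ Submodule.span ℂ ({Ψ, Ω} : Set H) :=
    Submodule.subset_span (by simp)
  have hΩm : Ω ∈ Submodule.span ℂ ({Ψ, Ω} : Set H) :=
    Submodule.subset_span (by simp)
  -- base inner product cases
  have hPP : (inner ℂ (U Ψ) (U Ψ) : ℂ) = inner ℂ Ψ Ψ := by rw [hUΨ, hΩΩ, hΨΨ]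
  have hPO : (inner ℂ (U Ψ) (U Ω) : ℂ) = inner ℂ Ψ Ω := by
    rw [hUΨ, hUΩ]
    rw [inner_sub_right, inner_smul_right, hΩΩ, mul_one, hconj]
    linear_combination -Complex.add_conj (inner ℂ Ψ Ω : ℂ)
  have hOP : (inner ℂ (U Ω) (U Ψ) : ℂ) = inner ℂ Ω Ψ := by
    rw [← inner_conj_symm (U Ω) (U Ψ), hPO, inner_conj_symm]
  have hOO : (inner ℂ (U Ω) (U Ω) : ℂ) = inner ℂ Ω Ω := by
    have hc' : starRingEnd ℂ (inner ℂ Ψ Ω) + inner ℂ Ψ Ω = ((2 * (inner ℂ Ψ Ω : ℂ).re : ℝ) : ℂ) := by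
      rw [← hconj]; exact hc
    rw [hUΩ, hΩΩ]
    simp only [inner_sub_left, inner_sub_right, inner_smul_left, inner_smul_right,
      hΩΩ, hΨΨ, hconj, Complex.conj_ofReal]
    linear_combination (-((2 * (inner ℂ Ψ Ω : ℂ).re : ℝ) : ℂ)) * hc'
  refine ⟨hlin, ?_, ?_, ?_, hUΨ, hUΩ⟩
  · intro Φ hΦ
    rw [hU]
    exact Submodule.add_mem _ (Submodule.sub_mem _ (Submodule.smul_mem _ _ hΦ)
      (Submodule.smul_mem _ _ hΨm)) (Submodule.smul_mem _ _ hΩm)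
  · intro Φ₁ h₁ Φ₂ h₂
    obtain ⟨c₁, d₁, rfl⟩ := Submodule.mem_span_pair.mp h₁
    obtain ⟨c₂, d₂, rfl⟩ := Submodule.mem_span_pair.mp h₂
    rw [hadd, hadd, hsmul, hsmul, hsmul, hsmul]
    simp only [inner_add_left, inner_add_right, inner_smul_left, inner_smul_right,
      hPP, hPO, hOP, hOO]
  · intro Ξ hΞ
    obtain ⟨c, d, rfl⟩ := Submodule.mem_span_pair.mp hΞ
    set r : ℂ := ((2 * (inner ℂ Ψ Ω : ℂ).re : ℝ) : ℂ) with hr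
    refine ⟨(d + c * r) • Ψ + (-c) • Ω, ?_, ?_⟩
    · exact Submodule.add_mem _ (Submodule.smul_mem _ _ hΨm) (Submodule.smul_mem _ _ hΩm)
    · rw [hadd, hsmul, hsmul, hUΨ, hUΩ]
      module
end

section
/- There does not exist a continuous function Ω : 𝕊² → ℂ² such that for every r = (x,y,z) ∈ 𝕊² the vector Ω(r) is a unit vector satisfying (r·σ)Ω(r) = Ω(r), where r·σ = x σˣ + y σʸ + z σᶻ. Equivalently, the parametrized Hamiltonian H(r) = −r·σ on ℂ² admits no continuous global choice of normalized ground state (eigenvector of eigenvalue −1) over the 2-sphere. -/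
open Matrix

/-- The Pauli matrix σˣ. -/
noncomputable def pauliX : Matrix (Fin 2) (Fin 2) ℂ := !![0, 1; 1, 0]

/-- The Pauli matrix σʸ. -/
noncomputable def pauliY : Matrix (Fin 2) (Fin 2) ℂ := !![0, -Complex.I; Complex.I, 0]

/-- The Pauli matrix σᶻ. -/
noncomputable def pauliZ : Matrix (Fin 2) (Fin 2) ℂ := !![1, 0; 0, -1]

open Metric Complex

lemma exists_log (h : (ℝ × ℝ) → ℂ) (hc : Continuous h)
    (hne : ∀ u ∈ closedBall (0 : ℝ × ℝ) 1, h u ≠ 0) :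
    ∃ L : (ℝ × ℝ) → ℂ, (∀ u ∈ closedBall (0 : ℝ × ℝ) 1, ContinuousAt L u) ∧
      ∀ u ∈ closedBall (0 : ℝ × ℝ) 1, Complex.exp (L u) = h u := by
  set B : Set (ℝ × ℝ) := closedBall 0 1 with hB
  have hBcomp : IsCompact B := isCompact_closedBall 0 1
  have h0B : (0 : ℝ × ℝ) ∈ B := mem_closedBall_self zero_le_one
  obtain ⟨x₀, hx₀B, hx₀⟩ := hBcomp.exists_isMinOn ⟨0, h0B⟩
    ((continuous_norm.comp hc).continuousOn)
  set m : ℝ := ‖h x₀‖ with hm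
  have hmpos : 0 < m := by
    have := hne x₀ hx₀B
    simpa [hm] using norm_pos_iff.2 this
  have hmle : ∀ u ∈ B, m ≤ ‖h u‖ := fun u hu => hx₀ hu
  have hUC : UniformContinuousOn h B := hBcomp.uniformContinuousOn_of_continuous hc.continuousOn
  obtain ⟨δ, hδpos, hδ⟩ := Metric.uniformContinuousOn_iff.1 hUC m hmpos
  obtain ⟨n, hn⟩ := exists_nat_gt (1 / δ)
  have hnpos : 0 < (n : ℝ) := lt_trans (by positivity) hn
  have hnne : (n : ℝ) ≠ 0 := ne_of_gt hnpos
  set c : ℕ → ℝ := fun k => (k : ℝ) / n with hcdef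
  have hscale : ∀ (u : ℝ × ℝ), u ∈ B → ∀ (t : ℝ), 0 ≤ t → t ≤ 1 → t • u ∈ B := by
    intro u hu t ht0 ht1
    rw [hB, mem_closedBall_zero_iff] at hu ⊢
    rw [norm_smul]
    calc ‖t‖ * ‖u‖ ≤ 1 * 1 := by
          apply mul_le_mul _ hu (norm_nonneg u) zero_le_one
          rwa [Real.norm_of_nonneg ht0]
      _ = 1 := one_mul 1
  have hkn : ∀ k : ℕ, k ≤ n → (0 ≤ c k ∧ c k ≤ 1) := by
    intro k hk
    refine ⟨by positivity, ?_⟩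
    rw [hcdef]
    simp only
    rw [div_le_one hnpos]
    exact_mod_cast hk
  have hmem : ∀ (u : ℝ × ℝ), u ∈ B → ∀ k : ℕ, k ≤ n → c k • u ∈ B := by
    intro u hu k hk
    exact hscale u hu _ (hkn k hk).1 (hkn k hk).2
  -- the quotients are close to 1
  set q : (ℝ × ℝ) → ℕ → ℂ := fun u k => h (c (k+1) • u) / h (c k • u) with hqdef
  have hq : ∀ (u : ℝ × ℝ), u ∈ B → ∀ k : ℕ, k < n → q u k ∈ Metric.ball (1 : ℂ) 1 := by
    intro u hu k hk
    have ha : c (k+1) • u ∈ B := hmem u hu _ hk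
    have hb : c k • u ∈ B := hmem u hu _ (le_of_lt hk)
    have hbne : h (c k • u) ≠ 0 := hne _ hb
    have hdist : dist (c (k+1) • u) (c k • u) < δ := by
      rw [dist_eq_norm, ← sub_smul]
      have hsub : c (k+1) - c k = 1/n := by
        rw [hcdef]; push_cast; field_simp; ring
      rw [hsub, norm_smul]
      have hu1 : ‖u‖ ≤ 1 := by rwa [hB, mem_closedBall_zero_iff] at hu
      have h1n : ‖(1/(n:ℝ))‖ = 1/n := Real.norm_of_nonneg (by positivity)
      calc ‖(1/(n:ℝ))‖ * ‖u‖ ≤ (1/n) * 1 := by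
            rw [h1n]; exact mul_le_mul_of_nonneg_left hu1 (by positivity)
        _ = 1/n := mul_one _
        _ < δ := by
            rw [div_lt_iff₀ hnpos]
            rw [div_lt_iff₀ hδpos] at hn
            linarith [hn]
    have hclose : dist (h (c (k+1) • u)) (h (c k • u)) < m := hδ _ ha _ hb hdist
    rw [Metric.mem_ball]
    rw [dist_eq_norm] at hclose ⊢
    have hrw : q u k - 1 = (h (c (k+1) • u) - h (c k • u)) / h (c k • u) := by
      rw [hqdef]; field_simp
    rw [hrw, norm_div]
    have hden : m ≤ ‖h (c k • u)‖ := hmle _ hb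
    have hdenpos : 0 < ‖h (c k • u)‖ := lt_of_lt_of_le hmpos hden
    rw [div_lt_one hdenpos]
    exact lt_of_lt_of_le hclose hden
  -- define L
  set L : (ℝ × ℝ) → ℂ := fun u =>
    Complex.log (h 0) + ∑ k ∈ Finset.range n, Complex.log (q u k) with hLdef
  refine ⟨L, ?_, ?_⟩
  · -- continuity
    intro u hu
    have hterm : ∀ k ∈ Finset.range n, ContinuousAt (fun v => Complex.log (q v k)) u := by
      intro k hk
      have hklt : k < n := Finset.mem_range.1 hk
      have hqc : ContinuousAt (fun v => q v k) u := by
        apply ContinuousAt.div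
        · exact (hc.comp (continuous_const_smul (c (k+1)))).continuousAt
        · exact (hc.comp (continuous_const_smul (c k))).continuousAt
        · exact hne _ (hmem u hu k (le_of_lt hklt))
      apply hqc.clog
      rw [Complex.mem_slitPlane_iff]
      left
      have hb1 := hq u hu k hklt
      rw [Metric.mem_ball, dist_eq_norm] at hb1
      have h1 : |(q u k - 1).re| ≤ ‖q u k - 1‖ := Complex.abs_re_le_norm _
      have h2 : (q u k - 1).re = (q u k).re - 1 := by simp
      have h3 : ‖q u k - 1‖ < 1 := hb1
      rw [h2] at h1
      have := abs_le.1 h1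
      linarith [this.1]
    rw [hLdef]
    exact ContinuousAt.add continuousAt_const (tendsto_finset_sum _ hterm)
  · -- exp L = h
    intro u hu
    have key : ∀ j : ℕ, j ≤ n →
        Complex.exp (Complex.log (h 0) + ∑ k ∈ Finset.range j, Complex.log (q u k))
          = h (c j • u) := by
      intro j hj
      induction j with
      | zero =>
        simp only [Finset.range_zero, Finset.sum_empty, add_zero]
        rw [Complex.exp_log (hne 0 h0B)]
        have : c 0 • u = 0 := by rw [hcdef]; simp
        rw [this]
      | succ j ih =>
        have hj' : j ≤ n := le_of_lt (Nat.lt_of_succ_le hj)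
        have hjlt : j < n := Nat.lt_of_succ_le hj
        rw [Finset.sum_range_succ, ← add_assoc, Complex.exp_add, ih hj']
        have hqne : q u j ≠ 0 := by
          have := hq u hu j hjlt
          intro h0
          rw [h0] at this
          simp at this
        rw [Complex.exp_log hqne, hqdef]
        simp only
        rw [mul_comm, div_mul_cancel₀ _ (hne _ (hmem u hu j hj'))]
    have := key n le_rfl
    have hc1 : c n • u = u := by
      rw [hcdef]; simp only; rw [div_self hnne, one_smul]
    rw [hc1] at this
    rw [hLdef]
    exact this

lemma no_winding (h : (ℝ × ℝ) → ℂ) (hc : Continuous h)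
    (hne : ∀ u ∈ closedBall (0 : ℝ × ℝ) 1, h u ≠ 0)
    (hcirc : ∀ x y : ℝ, x ^ 2 + y ^ 2 = 1 → h (x, y) = (x : ℂ) + (y : ℂ) * Complex.I) :
    False := by
  obtain ⟨L, hLc, hLe⟩ := exists_log h hc hne
  set p : ℝ → ℝ × ℝ := fun t => (Real.cos (2 * Real.pi * t), Real.sin (2 * Real.pi * t))
    with hpdef
  have hpB : ∀ t, p t ∈ closedBall (0 : ℝ × ℝ) 1 := by
    intro t
    rw [mem_closedBall_zero_iff, Prod.norm_def]
    simp only [Real.norm_eq_abs]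
    exact max_le (Real.abs_cos_le_one _) (Real.abs_sin_le_one _)
  have hpc : Continuous p := by
    apply Continuous.prodMk
    · exact Real.continuous_cos.comp (continuous_const.mul continuous_id)
    · exact Real.continuous_sin.comp (continuous_const.mul continuous_id)
  set g : ℝ → ℝ := fun t => ((L (p t)).im - 2 * Real.pi * t) / (2 * Real.pi) with hgdef
  have hgc : Continuous g := by
    apply Continuous.div_const
    apply Continuous.sub _ (continuous_const.mul continuous_id)
    exact Complex.continuous_im.comp
      (continuous_iff_continuousAt.2 fun t => (hLc (p t) (hpB t)).comp hpc.continuousAt)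
  have hgint : ∀ t : ℝ, ∃ k : ℤ, g t = k := by
    intro t
    have hexp : Complex.exp (L (p t)) = Complex.exp ((2 * Real.pi * t : ℝ) * Complex.I) := by
      rw [hLe (p t) (hpB t), hcirc _ _ (Real.cos_sq_add_sin_sq _)]
      rw [Complex.exp_mul_I]
      push_cast
      rfl
    have : Complex.exp (L (p t) - (2 * Real.pi * t : ℝ) * Complex.I) = 1 := by
      rw [Complex.exp_sub, hexp, div_self (Complex.exp_ne_zero _)]
    obtain ⟨k, hk⟩ := Complex.exp_eq_one_iff.1 this
    refine ⟨k, ?_⟩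
    have him := congrArg Complex.im hk
    simp only [Complex.sub_im, Complex.mul_im, Complex.mul_re, Complex.ofReal_re, Complex.I_im,
      Complex.ofReal_im, Complex.I_re, Complex.intCast_re, Complex.intCast_im,
      Complex.re_ofNat, Complex.im_ofNat] at him
    rw [hgdef]
    simp only
    rw [div_eq_iff (by positivity : (2 * Real.pi : ℝ) ≠ 0)]
    linarith [him]
  -- g 1 = g 0 - 1
  have hp01 : p 1 = p 0 := by
    rw [hpdef]
    simp [Real.cos_two_pi, Real.sin_two_pi]
  have hg1 : g 1 = g 0 - 1 := by
    rw [hgdef]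
    simp only [hp01]
    field_simp
    ring
  -- IVT
  obtain ⟨k0, hk0⟩ := hgint 0
  have hmem : g 0 - 1/2 ∈ Set.Icc (g 1) (g 0) := by
    refine ⟨?_, ?_⟩
    · rw [hg1]; linarith
    · linarith
  have hIV := intermediate_value_Icc' (by norm_num : (0:ℝ) ≤ 1) hgc.continuousOn
  obtain ⟨t, _, ht⟩ := hIV hmem
  obtain ⟨k, hk⟩ := hgint t
  rw [hk, hk0] at ht
  have : (2 * k : ℝ) = 2 * k0 - 1 := by linarith
  have : (2 * k : ℤ) = 2 * k0 - 1 := by exact_mod_cast this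
  omega

/-- Make a point of `EuclideanSpace ℝ (Fin 3)`. -/
noncomputable def mk3 (a b c : ℝ) : EuclideanSpace ℝ (Fin 3) :=
  (EuclideanSpace.equiv (Fin 3) ℝ).symm ![a, b, c]

@[simp] lemma mk3_apply0 (a b c : ℝ) : mk3 a b c 0 = a := rfl
@[simp] lemma mk3_apply1 (a b c : ℝ) : mk3 a b c 1 = b := rfl
@[simp] lemma mk3_apply2 (a b c : ℝ) : mk3 a b c 2 = c := rfl

lemma norm_mk3 (a b c : ℝ) : ‖mk3 a b c‖ = Real.sqrt (a ^ 2 + b ^ 2 + c ^ 2) := by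
  rw [EuclideanSpace.norm_eq]
  congr 1
  rw [Fin.sum_univ_three]
  simp [mk3, Real.norm_eq_abs, sq_abs]

/-- Lift of a planar point to the sphere (before normalization). -/
noncomputable def lift3 (ε : ℝ) (p : ℝ × ℝ) : EuclideanSpace ℝ (Fin 3) :=
  mk3 p.1 p.2 (ε * Real.sqrt (1 - p.1 ^ 2 - p.2 ^ 2))

lemma one_le_norm_lift3 {ε : ℝ} (hε : ε ^ 2 = 1) (p : ℝ × ℝ) : 1 ≤ ‖lift3 ε p‖ := by
  rw [lift3, norm_mk3]
  have key : 1 ≤ p.1 ^ 2 + p.2 ^ 2 + (ε * Real.sqrt (1 - p.1 ^ 2 - p.2 ^ 2)) ^ 2 := by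
    rw [mul_pow, hε, one_mul]
    by_cases hp : 0 ≤ 1 - p.1 ^ 2 - p.2 ^ 2
    · rw [Real.sq_sqrt hp]; linarith
    · rw [Real.sqrt_eq_zero_of_nonpos (by linarith)]
      nlinarith
  calc (1 : ℝ) = Real.sqrt 1 := Real.sqrt_one.symm
    _ ≤ _ := Real.sqrt_le_sqrt key

lemma continuous_lift3 (ε : ℝ) : Continuous (lift3 ε) := by
  apply Continuous.comp (EuclideanSpace.equiv (Fin 3) ℝ).symm.continuous
  apply continuous_pi
  intro i
  fin_cases i
  · exact continuous_fst
  · exact continuous_snd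
  · apply continuous_const.mul
    apply Real.continuous_sqrt.comp
    continuity

lemma norm_lift3_ne {ε : ℝ} (hε : ε ^ 2 = 1) (p : ℝ × ℝ) : ‖lift3 ε p‖ ≠ 0 := by
  have := one_le_norm_lift3 hε p; linarith

/-- Normalized lift, as a sphere point. -/
noncomputable def sphPt (ε : ℝ) (hε : ε ^ 2 = 1) (p : ℝ × ℝ) :
    Metric.sphere (0 : EuclideanSpace ℝ (Fin 3)) 1 :=
  ⟨‖lift3 ε p‖⁻¹ • lift3 ε p, by
    rw [mem_sphere_zero_iff_norm, norm_smul, norm_inv, norm_norm,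
      inv_mul_cancel₀ (norm_lift3_ne hε p)]⟩

lemma continuous_sphPt (ε : ℝ) (hε : ε ^ 2 = 1) : Continuous (sphPt ε hε) := by
  apply Continuous.subtype_mk
  exact (((continuous_lift3 ε).norm).inv₀ (norm_lift3_ne hε)).smul (continuous_lift3 ε)

lemma sphPt_coord (ε : ℝ) (hε : ε ^ 2 = 1) (p : ℝ × ℝ) :
    ((sphPt ε hε p : EuclideanSpace ℝ (Fin 3)) 0 = ‖lift3 ε p‖⁻¹ * p.1) ∧
    ((sphPt ε hε p : EuclideanSpace ℝ (Fin 3)) 1 = ‖lift3 ε p‖⁻¹ * p.2) ∧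
    ((sphPt ε hε p : EuclideanSpace ℝ (Fin 3)) 2
      = ‖lift3 ε p‖⁻¹ * (ε * Real.sqrt (1 - p.1 ^ 2 - p.2 ^ 2))) :=
  ⟨rfl, rfl, rfl⟩

lemma sphPt_coord2 (ε : ℝ) (hε : ε ^ 2 = 1) (p : ℝ × ℝ) :
    (sphPt ε hε p : EuclideanSpace ℝ (Fin 3)) 2
      = ‖lift3 ε p‖⁻¹ * (ε * Real.sqrt (1 - p.1 ^ 2 - p.2 ^ 2)) := rfl

lemma sphPt_circle (ε : ℝ) (hε : ε ^ 2 = 1) (p : ℝ × ℝ) (hp : p.1 ^ 2 + p.2 ^ 2 = 1) :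
    (sphPt ε hε p : EuclideanSpace ℝ (Fin 3)) = mk3 p.1 p.2 0 := by
  have hz : Real.sqrt (1 - p.1 ^ 2 - p.2 ^ 2) = 0 := by
    rw [show 1 - p.1 ^ 2 - p.2 ^ 2 = 0 by linarith, Real.sqrt_zero]
  have hl : lift3 ε p = mk3 p.1 p.2 0 := by rw [lift3, hz, mul_zero]
  have hn : ‖lift3 ε p‖ = 1 := by
    rw [hl, norm_mk3]
    rw [show p.1 ^ 2 + p.2 ^ 2 + 0 ^ 2 = 1 by rw [hp]; ring, Real.sqrt_one]
  show ‖lift3 ε p‖⁻¹ • lift3 ε p = _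
  rw [hn, hl, inv_one, one_smul]

/-- Extract the two component equations of the eigenvector relation. -/
lemma eigen_eqs (x y z : ℝ) (v : EuclideanSpace ℂ (Fin 2))
    (hv : ((x : ℂ) • pauliX + (y : ℂ) • pauliY + (z : ℂ) • pauliZ).mulVec v = v) :
    (z : ℂ) * v 0 + ((x : ℂ) - (y : ℂ) * Complex.I) * v 1 = v 0 ∧
    ((x : ℂ) + (y : ℂ) * Complex.I) * v 0 - (z : ℂ) * v 1 = v 1 := by
  have h0 := congrFun hv 0
  have h1 := congrFun hv 1
  simp [pauliX, pauliY, pauliZ, Matrix.mulVec, dotProduct, Fin.sum_univ_two,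
    Matrix.smul_apply] at h0 h1
  constructor
  · linear_combination h0
  · linear_combination h1

lemma v_ne_zero (v : EuclideanSpace ℂ (Fin 2)) (hn : ‖v‖ = 1) : ¬ (v 0 = 0 ∧ v 1 = 0) := by
  rintro ⟨h0, h1⟩
  have : v = 0 := by
    ext i
    fin_cases i
    · exact h0
    · exact h1
  rw [this, norm_zero] at hn
  norm_num at hn

/-- north-hemisphere nonvanishing of the first component -/
lemma comp0_ne {x y z : ℝ} (hz : 0 ≤ z) (v : EuclideanSpace ℂ (Fin 2)) (hn : ‖v‖ = 1)
    (h1 : ((x : ℂ) + (y : ℂ) * Complex.I) * v 0 - (z : ℂ) * v 1 = v 1) : v 0 ≠ 0 := by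
  intro h0
  apply v_ne_zero v hn
  refine ⟨h0, ?_⟩
  rw [h0, mul_zero, zero_sub] at h1
  have hzc : (1 + (z : ℂ)) ≠ 0 := by
    intro h
    have : ((1 + z : ℝ) : ℂ) = 0 := by push_cast; linear_combination h
    rw [Complex.ofReal_eq_zero] at this
    linarith
  have : (1 + (z : ℂ)) * v 1 = 0 := by linear_combination -h1
  exact (mul_eq_zero.1 this).resolve_left hzc

/-- south-hemisphere nonvanishing of the second component -/
lemma comp1_ne {x y z : ℝ} (hz : z ≤ 0) (v : EuclideanSpace ℂ (Fin 2)) (hn : ‖v‖ = 1)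
    (h0 : (z : ℂ) * v 0 + ((x : ℂ) - (y : ℂ) * Complex.I) * v 1 = v 0) : v 1 ≠ 0 := by
  intro h1
  apply v_ne_zero v hn
  refine ⟨?_, h1⟩
  rw [h1, mul_zero, add_zero] at h0
  have hzc : (1 - (z : ℂ)) ≠ 0 := by
    intro h
    have : ((1 - z : ℝ) : ℂ) = 0 := by push_cast; linear_combination h
    rw [Complex.ofReal_eq_zero] at this
    linarith
  have : (1 - (z : ℂ)) * v 0 = 0 := by linear_combination -h0
  exact (mul_eq_zero.1 this).resolve_left hzc

/-- There is no continuous choice `Ω : 𝕊² → ℂ²` of unit vectors with `(r·σ) Ω(r) = Ω(r)`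
for every `r ∈ 𝕊²`; i.e. the family of Hamiltonians `H(r) = −r·σ` admits no continuous
global normalized ground state over the 2-sphere. -/
theorem no_continuous_ground_state :
    ¬ ∃ Ω : Metric.sphere (0 : EuclideanSpace ℝ (Fin 3)) 1 → EuclideanSpace ℂ (Fin 2),
      Continuous Ω ∧
      ∀ r : Metric.sphere (0 : EuclideanSpace ℝ (Fin 3)) 1,
        ‖Ω r‖ = 1 ∧
        (((r : EuclideanSpace ℝ (Fin 3)) 0 : ℂ) • pauliX
            + ((r : EuclideanSpace ℝ (Fin 3)) 1 : ℂ) • pauliY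
            + ((r : EuclideanSpace ℝ (Fin 3)) 2 : ℂ) • pauliZ).mulVec (Ω r) = Ω r := by
  rintro ⟨Ω, hΩc, hΩ⟩
  have hε1 : (1 : ℝ) ^ 2 = 1 := one_pow 2
  have hεm : (-1 : ℝ) ^ 2 = 1 := by norm_num
  set NP : ℝ × ℝ → Metric.sphere (0 : EuclideanSpace ℝ (Fin 3)) 1 := sphPt 1 hε1 with hNP
  set SP : ℝ × ℝ → Metric.sphere (0 : EuclideanSpace ℝ (Fin 3)) 1 := sphPt (-1) hεm with hSP
  have heig := fun r : Metric.sphere (0 : EuclideanSpace ℝ (Fin 3)) 1 =>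
    eigen_eqs ((r : EuclideanSpace ℝ (Fin 3)) 0) ((r : EuclideanSpace ℝ (Fin 3)) 1)
      ((r : EuclideanSpace ℝ (Fin 3)) 2) (Ω r) (hΩ r).2
  set F : ℝ × ℝ → ℂ := fun p => Ω (NP p) 0 with hFdef
  set G : ℝ × ℝ → ℂ := fun p => Ω (SP p) 1 with hGdef
  have hF : ∀ p, F p ≠ 0 := by
    intro p
    have hz : 0 ≤ (NP p : EuclideanSpace ℝ (Fin 3)) 2 := by
      rw [hNP, sphPt_coord2]
      apply mul_nonneg (inv_nonneg.2 (norm_nonneg _))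
      rw [one_mul]
      exact Real.sqrt_nonneg _
    exact comp0_ne hz (Ω (NP p)) (hΩ _).1 (heig (NP p)).2
  have hG : ∀ p, G p ≠ 0 := by
    intro p
    have hz : (SP p : EuclideanSpace ℝ (Fin 3)) 2 ≤ 0 := by
      rw [hSP, sphPt_coord2]
      apply mul_nonpos_of_nonneg_of_nonpos (inv_nonneg.2 (norm_nonneg _))
      rw [neg_one_mul]
      exact neg_nonpos_of_nonneg (Real.sqrt_nonneg _)
    exact comp1_ne hz (Ω (SP p)) (hΩ _).1 (heig (SP p)).1
  have hFc : Continuous F := by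
    exact (continuous_apply (0 : Fin 2)).comp
      ((EuclideanSpace.equiv (Fin 2) ℂ).continuous.comp (hΩc.comp (continuous_sphPt 1 hε1)))
  have hGc : Continuous G := by
    exact (continuous_apply (1 : Fin 2)).comp
      ((EuclideanSpace.equiv (Fin 2) ℂ).continuous.comp (hΩc.comp (continuous_sphPt (-1) hεm)))
  set h : ℝ × ℝ → ℂ := fun p => G p / F p with hhdef
  have hc : Continuous h := hGc.div hFc hF
  have hne : ∀ u ∈ closedBall (0 : ℝ × ℝ) 1, h u ≠ 0 := fun u _ => div_ne_zero (hG u) (hF u)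
  have hcirc : ∀ x y : ℝ, x ^ 2 + y ^ 2 = 1 → h (x, y) = (x : ℂ) + (y : ℂ) * Complex.I := by
    intro x y hxy
    have hcoeN : (NP (x, y) : EuclideanSpace ℝ (Fin 3)) = mk3 x y 0 :=
      sphPt_circle 1 hε1 (x, y) hxy
    have hcoeS : (SP (x, y) : EuclideanSpace ℝ (Fin 3)) = mk3 x y 0 :=
      sphPt_circle (-1) hεm (x, y) hxy
    have hNS : SP (x, y) = NP (x, y) := Subtype.ext (by rw [hcoeN, hcoeS])
    have hE := (heig (NP (x, y))).2
    rw [hcoeN] at hE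
    simp only [mk3_apply0, mk3_apply1, mk3_apply2, Complex.ofReal_zero, zero_mul,
      sub_zero] at hE
    have hGF : G (x, y) = ((x : ℂ) + (y : ℂ) * Complex.I) * F (x, y) := by
      rw [hGdef]
      simp only
      rw [hNS]
      exact hE.symm
    rw [hhdef]
    simp only
    rw [hGF, mul_div_assoc, div_self (hF (x, y)), mul_one]
  exact no_winding h hc hne hcirc
end
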